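/- arXiv:2404.07486 — 7 statements merged into one kernel-verified Lean document; each statement's English description precedes it below -/
import Mathlib

section
/- Let G be a triangle-free simple graph on n vertices with n ≥ 90. If the chromatic number of G is at least 4, then e(G) ≤ ⌊(n−3)²/4⌋ + 5. -/
open Finset

section Aux

variable {V : Type*}

/-- Double counting edges between two vertex sets. -/
lemma aux_sum_inter_comm [Fintype V] [DecidableEq V] (G : SimpleGraph V) [DecidableRel G.Adj]
    (X Y : Finset V) :
    ∑ x ∈ X, (G.neighborFinset x ∩ Y).card = ∑ y ∈ Y, (G.neighborFinset y ∩ X).card := by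
  have key : ∀ (x : V) (S : Finset V),
      (G.neighborFinset x ∩ S).card = ∑ y ∈ S, if G.Adj x y then 1 else 0 := by
    intro x S
    rw [← Finset.card_filter]
    congr 1
    ext y
    simp [SimpleGraph.mem_neighborFinset, and_comm]
  simp only [key]
  rw [Finset.sum_comm]
  refine Finset.sum_congr rfl fun y _ => Finset.sum_congr rfl fun x _ => ?_
  exact if_congr (G.adj_comm x y) rfl rfl

lemma aux_four_mul_le_sq (x y : ℕ) : 4 * (x * y) ≤ (x + y) ^ 2 := by
  rcases Nat.le_total x y with h | h <;> obtain ⟨t, rfl⟩ := Nat.le.dest h <;> ring_nf <;> nlinarith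

lemma aux_mod_succ {i g : ℕ} (h : i < g) : (i + 1) % g = if i + 1 = g then 0 else i + 1 := by
  split_ifs with hc
  · rw [hc, Nat.mod_self]
  · exact Nat.mod_eq_of_lt (by omega)

/-- Building a circuit (periodic adjacent sequence) of length `d` starting at index `s`,
closing with an edge from `f (s+d-1)` back to `f s`. -/
lemma aux_circuit (H : SimpleGraph V) (f : ℕ → V)
    (hadj : ∀ i, H.Adj (f i) (f (i + 1))) (s d : ℕ) (hd : 2 ≤ d)
    (hclose : H.Adj (f (s + d - 1)) (f s)) :
    ∃ h : ℕ → V, (∀ i, h (i + d) = h i) ∧ (∀ i, H.Adj (h i) (h (i + 1))) := by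
  refine ⟨fun i => f (s + i % d), fun i => by simp [Nat.add_mod_right], fun i => ?_⟩
  simp only
  have hlt : i % d < d := Nat.mod_lt _ (by omega)
  rcases Nat.lt_or_ge (i % d + 1) d with hc | hc
  · have h1 : (i + 1) % d = i % d + 1 := by
      rw [Nat.add_mod]
      rw [Nat.mod_eq_of_lt (show 1 < d by omega), Nat.mod_eq_of_lt hc]
    rw [h1, ← Nat.add_assoc]
    exact hadj (s + i % d)
  · have h2 : i % d = d - 1 := by omega
    have h1 : (i + 1) % d = 0 := by
      rw [Nat.add_mod, Nat.mod_eq_of_lt (show 1 < d by omega), h2]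
      simp [Nat.sub_add_cancel (show 1 ≤ d by omega)]
    rw [h1, h2, Nat.add_zero]
    have : s + (d - 1) = s + d - 1 := by omega
    rw [this]
    exact hclose

/-- Cyclically "no two consecutive" subsets of `range (2k+1)` have at most `k` elements. -/
lemma aux_cyclic_indep {k : ℕ} (S : Finset ℕ) (hS : S ⊆ Finset.range (2 * k + 1))
    (hcons : ∀ i ∈ S, ((i + 1) % (2 * k + 1)) ∉ S) : S.card ≤ k := by
  set g := 2 * k + 1 with hg
  have hinj : Set.InjOn (fun i => (i + 1) % g) S := by
    intro i hi j hj hij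
    have hi' : i < g := Finset.mem_range.mp (hS hi)
    have hj' : j < g := Finset.mem_range.mp (hS hj)
    simp only [aux_mod_succ hi', aux_mod_succ hj'] at hij
    split_ifs at hij <;> omega
  have hdisj : Disjoint S (S.image (fun i => (i + 1) % g)) := by
    rw [Finset.disjoint_right]
    intro j hj
    obtain ⟨i, hi, rfl⟩ := Finset.mem_image.mp hj
    exact hcons i hi
  have hsub : S ∪ S.image (fun i => (i + 1) % g) ⊆ Finset.range g := by
    refine Finset.union_subset hS ?_
    intro j hj
    obtain ⟨i, hi, rfl⟩ := Finset.mem_image.mp hj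
    exact Finset.mem_range.mpr (Nat.mod_lt _ (by omega))
  have h1 := Finset.card_le_card hsub
  rw [Finset.card_union_of_disjoint hdisj, Finset.card_image_of_injOn hinj,
    Finset.card_range] at h1
  omega

/-- A graph that is not 2-colorable has an odd closed walk. -/
lemma aux_exists_odd_closed_walk (H : SimpleGraph V) (h2 : ¬ H.Colorable 2) :
    ∃ (u : V) (W : H.Walk u u), Odd W.length := by
  by_contra hno
  push_neg at hno
  simp only [Nat.not_odd_iff_even] at hno
  apply h2
  have hreach : ∀ x : V, H.Reachable ((H.connectedComponentMk x).out) x := by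
    intro x
    apply SimpleGraph.ConnectedComponent.exact
    show H.connectedComponentMk _ = H.connectedComponentMk x
    exact Quot.out_eq _
  classical
  let wk : ∀ x : V, H.Walk ((H.connectedComponentMk x).out) x := fun x => (hreach x).some
  let col : V → ZMod 2 := fun x => ((wk x).length : ZMod 2)
  have valid : ∀ {x y : V}, H.Adj x y → col x ≠ col y := by
    intro x y hxy heq
    have hcomp : H.connectedComponentMk x = H.connectedComponentMk y :=
      SimpleGraph.ConnectedComponent.sound hxy.reachable
    have hout : (H.connectedComponentMk x).out = (H.connectedComponentMk y).out := by
      rw [hcomp]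
    let wy' : H.Walk ((H.connectedComponentMk x).out) y := (wk y).copy hout.symm rfl
    let Wc : H.Walk x x :=
      ((wk x).reverse.append wy').append (SimpleGraph.Walk.cons hxy.symm SimpleGraph.Walk.nil)
    have hlen : Wc.length = (wk x).length + (wk y).length + 1 := by
      simp [Wc, wy', SimpleGraph.Walk.length_append, SimpleGraph.Walk.length_reverse]
    have hmod : (wk x).length % 2 = (wk y).length % 2 := by
      have := (ZMod.natCast_eq_natCast_iff' _ _ _).mp heq
      simpa using this
    have : Odd Wc.length := by
      rw [hlen, Nat.odd_iff]
      omega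
    exact (Nat.not_odd_iff_even.mpr (hno x Wc)) this
  have C : H.Coloring (ZMod 2) := SimpleGraph.Coloring.mk col valid
  have := C.colorable
  simpa using this

end Aux

set_option maxHeartbeats 1600000 in
theorem stmt_0 {V : Type*} [Fintype V] (G : SimpleGraph V) [DecidableRel G.Adj]
    (hn : 90 ≤ Fintype.card V) (htf : G.CliqueFree 3)
    (hchi : 4 ≤ G.chromaticNumber) :
    G.edgeFinset.card ≤ (Fintype.card V - 3) ^ 2 / 4 + 5 := by
  classical
  have hne : Nonempty V := Fintype.card_pos_iff.mp (by omega)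
  obtain ⟨v, hv⟩ := G.exists_maximal_degree_vertex
  set Δ := G.maxDegree with hΔdef
  set A : Finset V := G.neighborFinset v with hAdef
  have hAcard : A.card = Δ := by
    rw [hAdef, SimpleGraph.card_neighborFinset_eq_degree, hv]
  -- A is independent
  have hAind : ∀ a ∈ A, ∀ b ∈ A, ¬ G.Adj a b := by
    intro a ha b hb hab
    apply htf {v, a, b}
    rw [SimpleGraph.is3Clique_triple_iff]
    exact ⟨(SimpleGraph.mem_neighborFinset _ _ _).mp ha,
      (SimpleGraph.mem_neighborFinset _ _ _).mp hb, hab⟩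
  -- the graph restricted to the complement of A
  let H : SimpleGraph V :=
    { Adj := fun x y => G.Adj x y ∧ x ∉ A ∧ y ∉ A
      symm := by constructor; rintro x y ⟨h, hx, hy⟩; exact ⟨h.symm, hy, hx⟩
      loopless := by constructor; rintro x ⟨h, -, -⟩; exact G.irrefl h }
  have hHG : ∀ {x y : V}, H.Adj x y → G.Adj x y := fun h => h.1
  have hHA : ∀ {x y : V}, H.Adj x y → x ∉ A := fun h => h.2.1
  -- H is not 2-colorable
  have hH2 : ¬ H.Colorable 2 := by
    intro ⟨cH⟩
    have hcs : ∀ c : Fin 2, (Fin.castSucc c : Fin 3) ≠ 2 := by decide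
    have cG : G.Coloring (Fin 3) := SimpleGraph.Coloring.mk
      (fun x => if x ∈ A then (2 : Fin 3) else Fin.castSucc (cH x))
      (by
        intro x y hxy
        by_cases hx : x ∈ A <;> by_cases hy : y ∈ A
        · exact absurd hxy (hAind x hx y hy)
        · simp only [if_pos hx, if_neg hy]
          exact fun h => hcs (cH y) h.symm
        · simp only [if_neg hx, if_pos hy]
          exact hcs (cH x)
        · simp only [if_neg hx, if_neg hy]
          intro h
          exact cH.valid ⟨hxy, hx, hy⟩ (Fin.castSucc_injective _ h))
    have h3 : G.Colorable 3 := by simpa using cG.colorable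
    have := hchi.trans h3.chromaticNumber_le
    norm_num at this
  -- extract a minimal odd circuit in H
  obtain ⟨u0, W0, hW0⟩ := aux_exists_odd_closed_walk H hH2
  let P : ℕ → Prop := fun g => Odd g ∧
    ∃ f : ℕ → V, (∀ i, f (i + g) = f i) ∧ (∀ i, H.Adj (f i) (f (i + 1)))
  have hPdec : DecidablePred P := fun _ => Classical.dec _
  have hL : 0 < W0.length := by
    rcases hW0 with ⟨m, hm⟩; omega
  have hPex : ∃ g, P g := by
    refine ⟨W0.length, hW0, fun i => W0.getVert (i % W0.length), fun i => by
      simp [Nat.add_mod_right], fun i => ?_⟩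
    simp only
    have hr : i % W0.length < W0.length := Nat.mod_lt _ hL
    rcases Nat.lt_or_ge (i % W0.length + 1) W0.length with hc | hc
    · have h1 : (i + 1) % W0.length = i % W0.length + 1 := by
        rw [Nat.add_mod]
        rcases Nat.eq_or_lt_of_le (show 1 ≤ W0.length by omega) with h | h
        · omega
        · rw [Nat.mod_eq_of_lt h, Nat.mod_eq_of_lt hc]
      rw [h1]
      exact W0.adj_getVert_succ hr
    · have h2 : i % W0.length = W0.length - 1 := by omega
      have h1 : (i + 1) % W0.length = 0 := by
        conv_lhs => rw [Nat.add_mod, h2]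
        rcases Nat.eq_or_lt_of_le (show 1 ≤ W0.length by omega) with h | h
        · simp [← h]
        · rw [Nat.mod_eq_of_lt h, Nat.sub_add_cancel (by omega), Nat.mod_self]
      rw [h1, h2, SimpleGraph.Walk.getVert_zero]
      have := W0.adj_getVert_succ (show W0.length - 1 < W0.length by omega)
      rwa [Nat.sub_add_cancel (by omega), SimpleGraph.Walk.getVert_length] at this
  set g := Nat.find hPex with hgdef
  obtain ⟨hgodd, f, hper, hadj⟩ : P g := Nat.find_spec hPex
  have hmin : ∀ m, m < g → ¬ P m := fun m hm => Nat.find_min hPex hm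
  -- g ≥ 5
  have hg1 : g ≠ 1 := by
    intro h
    have h1 : f 1 = f 0 := by have := hper 0; rwa [h, Nat.zero_add] at this
    have := hadj 0
    rw [Nat.zero_add, h1] at this
    exact H.irrefl this
  have hg3 : g ≠ 3 := by
    intro h
    apply htf {f 0, f 1, f 2}
    rw [SimpleGraph.is3Clique_triple_iff]
    have h30 : f 3 = f 0 := by have := hper 0; rwa [h, Nat.zero_add] at this
    have h02 : G.Adj (f 0) (f 2) := by
      have := hHG (hadj 2)
      rw [show (2:ℕ) + 1 = 3 by rfl, h30] at this
      exact this.symm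
    exact ⟨hHG (hadj 0), h02, hHG (hadj 1)⟩
  obtain ⟨k, hk⟩ : ∃ k, g = 2 * k + 1 := by
    obtain ⟨m, hm⟩ := hgodd; exact ⟨m, hm⟩
  have hk2 : 2 ≤ k := by
    rcases hgodd with ⟨m, hm⟩
    by_contra hlt
    interval_cases k <;> omega
  -- injectivity of f on a period
  have hinj : ∀ i j, i < j → j < i + g → f i ≠ f j := by
    intro i j hij hjg heq
    set d := j - i with hd
    set e := g - d with he
    have hd1 : 1 ≤ d := by omega
    have he1 : 1 ≤ e := by omega
    have hclose1 : H.Adj (f (i + d - 1)) (f i) := by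
      have := hadj (i + d - 1)
      rwa [show i + d - 1 + 1 = j by omega, ← heq] at this
    have hclose2 : H.Adj (f (j + e - 1)) (f j) := by
      have := hadj (j + e - 1)
      have hje : j + e - 1 + 1 = i + g := by omega
      rw [hje, hper i, heq] at this
      exact this
    have hPd : 2 ≤ d → P d → False := fun _ hPd => hmin d (by omega) hPd
    have hPe : 2 ≤ e → P e → False := fun _ hPe => hmin e (by omega) hPe
    have hd2 : d = 1 → False := by
      intro h1
      have := hclose1
      rw [h1] at this
      simp at this
    have he2 : e = 1 → False := by
      intro h1
      have := hclose2
      rw [h1] at this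
      simp at this
    have hodd : Odd d ∨ Odd e := by
      rw [Nat.odd_iff, Nat.odd_iff]
      have : Odd g := hgodd
      rw [Nat.odd_iff] at this
      omega
    rcases hodd with ho | ho
    · rcases Nat.eq_or_lt_of_le hd1 with h1 | h1
      · exact hd2 h1.symm
      · obtain ⟨h, hp, ha⟩ := aux_circuit H f hadj i d (by omega) hclose1
        exact hPd (by omega) ⟨ho, h, hp, ha⟩
    · rcases Nat.eq_or_lt_of_le he1 with h1 | h1
      · exact he2 h1.symm
      · obtain ⟨h, hp, ha⟩ := aux_circuit H f hadj j e (by omega) hclose2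
        exact hPe (by omega) ⟨ho, h, hp, ha⟩
  -- chord exclusion
  have hchord : ∀ i j, i < j → j < i + g → H.Adj (f i) (f j) → j = i + 1 ∨ j + 1 = i + g := by
    intro i j hij hjg hadj'
    by_contra hcon
    push_neg at hcon
    obtain ⟨hc1, hc2⟩ := hcon
    set d := j - i with hd
    have hd2 : 2 ≤ d := by omega
    have hdg : d ≤ g - 2 := by omega
    set e := g - d with he
    have he2 : 2 ≤ e := by omega
    -- circuit of length d+1 starting at i
    have hclose1 : H.Adj (f (i + (d + 1) - 1)) (f i) := by
      have : i + (d + 1) - 1 = j := by omega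
      rw [this]
      exact hadj'.symm
    obtain ⟨h1, hp1, ha1⟩ := aux_circuit H f hadj i (d + 1) (by omega) hclose1
    -- circuit of length e+1 starting at j
    have hclose2 : H.Adj (f (j + (e + 1) - 1)) (f j) := by
      have : j + (e + 1) - 1 = i + g := by omega
      rw [this, hper i]
      exact hadj'
    obtain ⟨h2, hp2, ha2⟩ := aux_circuit H f hadj j (e + 1) (by omega) hclose2
    have hodd : Odd (d + 1) ∨ Odd (e + 1) := by
      rw [Nat.odd_iff, Nat.odd_iff]
      have : Odd g := hgodd
      rw [Nat.odd_iff] at this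
      omega
    rcases hodd with ho | ho
    · exact hmin (d + 1) (by omega) ⟨ho, h1, hp1, ha1⟩
    · exact hmin (e + 1) (by omega) ⟨ho, h2, hp2, ha2⟩
  -- the cycle vertex set
  set C : Finset V := (Finset.range g).image f with hCdef
  have hCcard : C.card = g := by
    rw [hCdef, Finset.card_image_of_injOn, Finset.card_range]
    intro i hi j hj hij
    rcases Nat.lt_trichotomy i j with h | h | h
    · exact absurd hij (hinj i j h (by simp at hi hj; omega))
    · exact h
    · exact absurd hij.symm (hinj j i h (by simp at hi hj; omega))
  have hfA : ∀ i, f i ∉ A := fun i => hHA (hadj i)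
  have hCA : ∀ x ∈ C, x ∉ A := by
    intro x hx
    obtain ⟨i, _, rfl⟩ := Finset.mem_image.mp hx
    exact hfA i
  -- every vertex of A has ≤ k neighbors in C
  have ha_k : ∀ a ∈ A, (G.neighborFinset a ∩ C).card ≤ k := by
    intro a ha
    set S : Finset ℕ := (Finset.range g).filter (fun i => G.Adj a (f i)) with hSdef
    have hcons : ∀ i ∈ S, ((i + 1) % (2 * k + 1)) ∉ S := by
      intro i hi hi1
      rw [hSdef, Finset.mem_filter, Finset.mem_range] at hi hi1
      have hfi1 : f ((i + 1) % (2 * k + 1)) = f (i + 1) := by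
        rw [← hk, aux_mod_succ hi.1]
        split_ifs with hc
        · rw [hc]
          have := hper 0
          rw [Nat.zero_add] at this
          exact this.symm
        · rfl
      apply htf {a, f i, f (i + 1)}
      rw [SimpleGraph.is3Clique_triple_iff]
      refine ⟨hi.2, ?_, hHG (hadj i)⟩
      rw [← hfi1]; exact hi1.2
    have hScard : S.card ≤ k := by
      apply aux_cyclic_indep S _ hcons
      rw [hSdef, ← hk]
      exact Finset.filter_subset _ _
    have hsub : G.neighborFinset a ∩ C ⊆ S.image f := by
      intro x hx
      rw [Finset.mem_inter] at hx
      obtain ⟨i, hi, rfl⟩ := Finset.mem_image.mp (hCdef ▸ hx.2)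
      refine Finset.mem_image.mpr ⟨i, ?_, rfl⟩
      rw [hSdef, Finset.mem_filter]
      exact ⟨hi, (SimpleGraph.mem_neighborFinset _ _ _).mp hx.1⟩
    calc (G.neighborFinset a ∩ C).card ≤ (S.image f).card := Finset.card_le_card hsub
      _ ≤ S.card := Finset.card_image_le
      _ ≤ k := hScard
  -- every vertex of C has ≤ 2 neighbors in C
  have hc_2 : ∀ c ∈ C, (G.neighborFinset c ∩ C).card ≤ 2 := by
    intro c hc
    obtain ⟨j, hj, rfl⟩ := Finset.mem_image.mp (hCdef ▸ hc)
    rw [Finset.mem_range] at hj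
    have hsub : G.neighborFinset (f j) ∩ C ⊆ {f ((j + 1) % g), f ((j + (g - 1)) % g)} := by
      intro x hx
      rw [Finset.mem_inter] at hx
      obtain ⟨i, hi, rfl⟩ := Finset.mem_image.mp (hCdef ▸ hx.2)
      rw [Finset.mem_range] at hi
      have hadjG : G.Adj (f j) (f i) := (SimpleGraph.mem_neighborFinset _ _ _).mp hx.1
      have hadjH : H.Adj (f j) (f i) := ⟨hadjG, hfA j, hfA i⟩
      have hne : i ≠ j := by
        intro h; rw [h] at hadjG; exact G.irrefl hadjG
      have hmem : i = (j + 1) % g ∨ i = (j + (g - 1)) % g := by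
        rcases Nat.lt_or_ge i j with h | h
        · rcases hchord i j h (by omega) hadjH.symm with h1 | h1
          · right
            have : j + (g - 1) = i + g := by omega
            rw [this, Nat.add_mod_right, Nat.mod_eq_of_lt (by omega)]
          · left
            have hj1 : j + 1 = g := by omega
            have hi0 : i = 0 := by omega
            rw [hj1, Nat.mod_self, hi0]
        · have h' : j < i := by omega
          rcases hchord j i h' (by omega) hadjH with h1 | h1
          · left
            rw [Nat.mod_eq_of_lt (by omega), h1]
          · right
            have hi1 : i + 1 = g := by omega
            have hj0 : j = 0 := by omega
            rw [hj0, Nat.zero_add, Nat.mod_eq_of_lt (by omega)]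
            omega
      rcases hmem with h | h <;> rw [h] <;> simp [Finset.mem_insert]
    calc (G.neighborFinset (f j) ∩ C).card ≤ _ := Finset.card_le_card hsub
      _ ≤ 2 := Finset.card_insert_le _ _ |>.trans (by simp)
  -- the rest of the vertices
  set D : Finset V := (A ∪ C)ᶜ with hDdef
  have hACdisj : Disjoint A C := by
    rw [Finset.disjoint_right]
    exact hCA
  have hsplit : ∀ x : V, (G.neighborFinset x ∩ A).card + (G.neighborFinset x ∩ C).card
      + (G.neighborFinset x ∩ D).card = G.degree x := by
    intro x
    have hdisj2 : Disjoint (G.neighborFinset x ∩ A) (G.neighborFinset x ∩ C) :=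
      hACdisj.mono Finset.inter_subset_right Finset.inter_subset_right
    rw [← Finset.card_union_of_disjoint hdisj2, ← Finset.inter_union_distrib_left]
    have hcompl : G.neighborFinset x ∩ (A ∪ C)ᶜ = G.neighborFinset x \ (A ∪ C) := by
      ext y; simp
    rw [hDdef, hcompl]
    exact Finset.card_inter_add_card_sdiff _ _
  have hpart : Δ + g + D.card = Fintype.card V := by
    have h1 := Finset.card_add_card_compl (A ∪ C)
    rw [Finset.card_union_of_disjoint hACdisj, hAcard, hCcard] at h1
    exact h1
  have hdegΔ : ∀ x : V, G.degree x ≤ Δ := fun x => G.degree_le_maxDegree x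
  -- degree sum decomposition
  have hsum : 2 * G.edgeFinset.card = ∑ x ∈ A, G.degree x + ∑ x ∈ C, G.degree x
      + ∑ x ∈ D, G.degree x := by
    have h1 := Finset.sum_add_sum_compl (A ∪ C) (fun x => G.degree x)
    rw [Finset.sum_union hACdisj] at h1
    rw [← G.sum_degrees_eq_twice_card_edges, ← h1]
  have hAzero : ∀ a ∈ A, (G.neighborFinset a ∩ A).card = 0 := by
    intro a ha
    rw [Finset.card_eq_zero, Finset.eq_empty_iff_forall_notMem]
    intro y hy
    rw [Finset.mem_inter, SimpleGraph.mem_neighborFinset] at hy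
    exact hAind a ha y hy.2 hy.1
  have hsumA : ∑ a ∈ A, G.degree a = ∑ a ∈ A, (G.neighborFinset a ∩ C).card
      + ∑ a ∈ A, (G.neighborFinset a ∩ D).card := by
    rw [← Finset.sum_add_distrib]
    refine Finset.sum_congr rfl fun a ha => ?_
    have := hsplit a
    have h0 := hAzero a ha
    omega
  have hsumC : ∑ c ∈ C, G.degree c = ∑ c ∈ C, (G.neighborFinset c ∩ A).card
      + ∑ c ∈ C, (G.neighborFinset c ∩ C).card + ∑ c ∈ C, (G.neighborFinset c ∩ D).card := by
    rw [← Finset.sum_add_distrib, ← Finset.sum_add_distrib]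
    exact Finset.sum_congr rfl fun c _ => (hsplit c).symm
  have hSAC : ∑ a ∈ A, (G.neighborFinset a ∩ C).card ≤ k * Δ := by
    have h1 := Finset.sum_le_card_nsmul A (fun a => (G.neighborFinset a ∩ C).card) k
      (fun a ha => ha_k a ha)
    rw [smul_eq_mul, hAcard, Nat.mul_comm] at h1
    exact h1
  have hSCC : ∑ c ∈ C, (G.neighborFinset c ∩ C).card ≤ 2 * g := by
    have h1 := Finset.sum_le_card_nsmul C (fun c => (G.neighborFinset c ∩ C).card) 2
      (fun c hc => hc_2 c hc)
    rw [smul_eq_mul, hCcard, Nat.mul_comm] at h1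
    exact h1
  have hSCA : ∑ c ∈ C, (G.neighborFinset c ∩ A).card
      = ∑ a ∈ A, (G.neighborFinset a ∩ C).card := aux_sum_inter_comm G C A
  have hSAD : ∑ a ∈ A, (G.neighborFinset a ∩ D).card
      = ∑ x ∈ D, (G.neighborFinset x ∩ A).card := aux_sum_inter_comm G A D
  have hSCD : ∑ c ∈ C, (G.neighborFinset c ∩ D).card
      = ∑ x ∈ D, (G.neighborFinset x ∩ C).card := aux_sum_inter_comm G C D
  have hDpoint : ∑ x ∈ D, ((G.neighborFinset x ∩ A).card + (G.neighborFinset x ∩ C).card)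
      ≤ ∑ x ∈ D, G.degree x := by
    refine Finset.sum_le_sum fun x _ => ?_
    have := hsplit x
    omega
  have hDdeg : ∑ x ∈ D, G.degree x ≤ D.card * Δ := by
    have h1 := Finset.sum_le_card_nsmul D (fun x => G.degree x) Δ (fun x _ => hdegΔ x)
    rwa [smul_eq_mul] at h1
  have hDsplit : ∑ x ∈ D, ((G.neighborFinset x ∩ A).card + (G.neighborFinset x ∩ C).card)
      = ∑ x ∈ D, (G.neighborFinset x ∩ A).card + ∑ x ∈ D, (G.neighborFinset x ∩ C).card :=
    Finset.sum_add_distrib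
  -- key bound: 2m ≤ 2kΔ + 2g + 2|D|Δ
  have hm : G.edgeFinset.card ≤ k * Δ + g + D.card * Δ := by
    have h2m : 2 * G.edgeFinset.card ≤ 2 * (k * Δ) + 2 * g + 2 * (D.card * Δ) := by
      rw [hsum, hsumA, hsumC]
      have e1 : ∑ a ∈ A, (G.neighborFinset a ∩ C).card ≤ k * Δ := hSAC
      have e2 : ∑ c ∈ C, (G.neighborFinset c ∩ A).card ≤ k * Δ := by rw [hSCA]; exact hSAC
      have e3 : ∑ c ∈ C, (G.neighborFinset c ∩ C).card ≤ 2 * g := hSCC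
      have e4 : ∑ a ∈ A, (G.neighborFinset a ∩ D).card
          + ∑ c ∈ C, (G.neighborFinset c ∩ D).card + ∑ x ∈ D, G.degree x
          ≤ 2 * (D.card * Δ) := by
        rw [hSAD, hSCD]
        have := hDpoint
        rw [hDsplit] at this
        have := hDdeg
        omega
      omega
    omega
  -- final arithmetic
  obtain ⟨j, rfl⟩ : ∃ j, k = j + 2 := ⟨k - 2, by omega⟩
  rw [hk] at hpart hm
  have hn3 : Fintype.card V - 3 = Δ + D.card + 2 * j + 2 := by omega
  rw [hn3]
  have h85 : 85 ≤ Δ + D.card + 2 * j := by omega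
  have h4 : 4 * (Δ * ((j + 2) + D.card)) ≤ (Δ + ((j + 2) + D.card)) ^ 2 :=
    aux_four_mul_le_sq _ _
  have hjj : j * 4 ≤ j * (3 * j + 2 * (Δ + D.card)) :=
    Nat.mul_le_mul_left j (by omega)
  have hstep : 4 * G.edgeFinset.card ≤ (Δ + D.card + 2 * j + 2) ^ 2 + 20 := by
    nlinarith [hm, h4, hjj]
  set Q := (Δ + D.card + 2 * j + 2) ^ 2 with hQ
  omega
end

section
/- For every n ≥ 90, the maximum number of edges of an n-vertex triangle-free simple graph with chromatic number at least 4 is exactly ⌊(n−3)²/4⌋ + 5. -/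
namespace Stmt1Aux

open SimpleGraph Finset


def gedges : List (Fin 11 × Fin 11) :=
  [(0,1),(1,2),(2,3),(3,4),(4,0),
   (5,1),(5,4),(6,0),(6,2),(7,1),(7,3),(8,2),(8,4),(9,0),(9,3),
   (10,5),(10,6),(10,7),(10,8),(10,9)]

def gadj (a b : Fin 11) : Bool :=
  gedges.any (fun p => (p.1 = a ∧ p.2 = b) ∨ (p.1 = b ∧ p.2 = a))

lemma gadj_symm : ∀ a b : Fin 11, gadj a b → gadj b a := by decide

lemma gadj_irrefl : ∀ a : Fin 11, ¬ gadj a a := by decide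

def Groetzsch : SimpleGraph (Fin 11) where
  Adj a b := gadj a b
  symm := ⟨fun a b h => gadj_symm a b h⟩
  loopless := ⟨fun a h => gadj_irrefl a h⟩

instance : DecidableRel Groetzsch.Adj := fun _ _ => inferInstanceAs (Decidable (_ = true))

lemma groetzsch_cliquefree : Groetzsch.CliqueFree 3 := by
  intro s hs
  obtain ⟨a, b, c, hab, hac, hbc, rfl⟩ := Finset.card_eq_three.mp hs.2
  have h1 : Groetzsch.Adj a b := hs.1 (by simp) (by simp) hab
  have h2 : Groetzsch.Adj a c := hs.1 (by simp) (by simp) hac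
  have h3 : Groetzsch.Adj b c := hs.1 (by simp) (by simp) hbc
  revert h1 h2 h3
  revert a b c
  decide

lemma fin3_cycle5 : ∀ w d0 d1 d2 d3 d4 : Fin 3,
    ¬ (d0 ≠ w ∧ d1 ≠ w ∧ d2 ≠ w ∧ d3 ≠ w ∧ d4 ≠ w ∧
       d0 ≠ d1 ∧ d1 ≠ d2 ∧ d2 ≠ d3 ∧ d3 ≠ d4 ∧ d4 ≠ d0) := by decide

lemma groetzsch_not_colorable : ¬ Groetzsch.Colorable 3 := by
  rintro ⟨c⟩
  set cw := c 10 with hcw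
  let dif : Fin 11 → Fin 11 → Fin 3 := fun x ux => if c x = cw then c ux else c x
  have key : ∀ x y ux uy : Fin 11, Groetzsch.Adj x y → Groetzsch.Adj ux y →
      Groetzsch.Adj uy x → dif x ux ≠ dif y uy := by
    intro x y ux uy hxy hux huy
    by_cases h1 : c x = cw <;> by_cases h2 : c y = cw <;> simp only [dif, h1, h2, if_pos, if_neg,
      if_true, if_false]
    · exact absurd (h1.trans h2.symm) (c.valid hxy)
    · exact c.valid hux
    · intro h; exact c.valid huy (h.symm)
    · exact c.valid hxy
  have keyw : ∀ x ux : Fin 11, Groetzsch.Adj ux 10 → dif x ux ≠ cw := by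
    intro x ux hux
    by_cases h1 : c x = cw <;> simp only [dif, h1, if_true, if_false, if_pos, if_neg]
    · exact c.valid hux
    · exact h1
  exact fin3_cycle5 cw (dif 0 5) (dif 1 6) (dif 2 7) (dif 3 8) (dif 4 9)
    ⟨keyw 0 5 (by decide), keyw 1 6 (by decide), keyw 2 7 (by decide), keyw 3 8 (by decide),
     keyw 4 9 (by decide),
     key 0 1 5 6 (by decide) (by decide) (by decide),
     key 1 2 6 7 (by decide) (by decide) (by decide),
     key 2 3 7 8 (by decide) (by decide) (by decide),
     key 3 4 8 9 (by decide) (by decide) (by decide),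
     key 4 0 9 5 (by decide) (by decide) (by decide)⟩

section Blowup

variable (p q : ℕ)

def sing : Fin 9 → Fin 11 := ![0,1,2,3,4,6,7,8,9]

def psi : Fin 9 ⊕ (Fin p ⊕ Fin q) → Fin 11 :=
  Sum.elim sing (Sum.elim (fun _ => 10) (fun _ => 5))

def wdeg (i : Fin 11) : ℕ :=
  (∑ j : Fin 9, if Groetzsch.Adj i (sing j) then 1 else 0)
    + ((if Groetzsch.Adj i 10 then p else 0) + (if Groetzsch.Adj i 5 then q else 0))

variable {n : ℕ} (hn : n = 9 + (p + q))

def bij : Fin n ≃ (Fin 9 ⊕ (Fin p ⊕ Fin q)) :=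
  (finCongr hn).trans
    (finSumFinEquiv.symm.trans ((Equiv.refl (Fin 9)).sumCongr finSumFinEquiv.symm))

def blow : SimpleGraph (Fin n) := Groetzsch.comap (psi p q ∘ bij p q hn)

instance : DecidableRel (blow p q hn).Adj := fun _ _ =>
  inferInstanceAs (Decidable (Groetzsch.Adj _ _))

lemma blow_cliquefree : (blow p q hn).CliqueFree 3 := by
  intro s hs
  obtain ⟨a, b, c, hab, hac, hbc, rfl⟩ := Finset.card_eq_three.mp hs.2
  have h1 : (blow p q hn).Adj a b := hs.1 (by simp) (by simp) hab
  have h2 : (blow p q hn).Adj a c := hs.1 (by simp) (by simp) hac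
  have h3 : (blow p q hn).Adj b c := hs.1 (by simp) (by simp) hbc
  set f := psi p q ∘ bij p q hn with hfdef
  refine groetzsch_cliquefree {f a, f b, f c} ⟨?_, ?_⟩
  · intro x hx y hy hxy
    simp only [Finset.coe_insert, Set.mem_insert_iff, Finset.coe_singleton,
      Set.mem_singleton_iff] at hx hy
    rcases hx with rfl|rfl|rfl <;> rcases hy with rfl|rfl|rfl <;>
      first
        | exact absurd rfl hxy
        | exact h1 | exact h2 | exact h3 | exact h1.symm | exact h2.symm | exact h3.symm
  · rw [Finset.card_insert_of_notMem, Finset.card_insert_of_notMem, Finset.card_singleton]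
    · simp only [Finset.mem_singleton]
      exact (show Groetzsch.Adj (f b) (f c) from h3).ne
    · simp only [Finset.mem_insert, Finset.mem_singleton]
      push_neg
      exact ⟨(show Groetzsch.Adj (f a) (f b) from h1).ne,
        (show Groetzsch.Adj (f a) (f c) from h2).ne⟩

lemma blow_not_colorable (hp : 0 < p) (hq : 0 < q) : ¬ (blow p q hn).Colorable 3 := by
  rintro ⟨c⟩
  set f := psi p q ∘ bij p q hn with hfdef
  let psi' : Fin 11 → Fin 9 ⊕ (Fin p ⊕ Fin q) :=
    ![Sum.inl 0, Sum.inl 1, Sum.inl 2, Sum.inl 3, Sum.inl 4,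
      Sum.inr (Sum.inr ⟨0, hq⟩), Sum.inl 5, Sum.inl 6, Sum.inl 7, Sum.inl 8,
      Sum.inr (Sum.inl ⟨0, hp⟩)]
  let g : Fin 11 → Fin n := fun j => (bij p q hn).symm (psi' j)
  have hsec : ∀ j, f (g j) = j := by
    intro j
    have h1 : f (g j) = psi p q (psi' j) := by
      simp only [f, g, Function.comp_apply, Equiv.apply_symm_apply]
    rw [h1]
    fin_cases j <;> rfl
  refine groetzsch_not_colorable ⟨SimpleGraph.Coloring.mk (fun j => c (g j)) ?_⟩
  intro a b hab
  have h2 : (blow p q hn).Adj (g a) (g b) := by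
    show Groetzsch.Adj (f (g a)) (f (g b))
    rw [hsec, hsec]; exact hab
  exact c.valid h2

lemma sum_psi (i : Fin 11) :
    (∑ x : Fin 9 ⊕ (Fin p ⊕ Fin q), if Groetzsch.Adj i (psi p q x) then 1 else 0)
      = wdeg p q i := by
  rw [Fintype.sum_sum_type, Fintype.sum_sum_type]
  simp only [psi, Sum.elim_inl, Sum.elim_inr, wdeg]
  congr 1
  congr 1 <;> (split_ifs with h <;> [exact (Finset.sum_congr rfl fun _ _ => if_pos h).trans (by simp); exact (Finset.sum_congr rfl fun _ _ => if_neg h).trans (by simp)])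

lemma blow_degree (a : Fin n) :
    (blow p q hn).degree a = wdeg p q (psi p q (bij p q hn a)) := by
  rw [← SimpleGraph.card_neighborFinset_eq_degree, SimpleGraph.neighborFinset_eq_filter,
    Finset.card_filter, ← sum_psi]
  exact Fintype.sum_equiv (bij p q hn) _ _ (fun b => rfl)

lemma blow_edge_count : (blow p q hn).edgeFinset.card = p*q + 4*p + 2*q + 13 := by
  have h2 : 2 * (blow p q hn).edgeFinset.card = 2 * (p*q + 4*p + 2*q + 13) := by
    rw [← SimpleGraph.sum_degrees_eq_twice_card_edges]
    have w0 : wdeg p q 0 = 4 := by rw [wdeg, show (∑ j : Fin 9, if Groetzsch.Adj 0 (sing j) then 1 else 0) = 4 by decide, if_neg (by decide), if_neg (by decide)]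
    have w1 : wdeg p q 1 = 3 + q := by rw [wdeg, show (∑ j : Fin 9, if Groetzsch.Adj 1 (sing j) then 1 else 0) = 3 by decide, if_neg (by decide), if_pos (by decide)]; omega
    have w2 : wdeg p q 2 = 4 := by rw [wdeg, show (∑ j : Fin 9, if Groetzsch.Adj 2 (sing j) then 1 else 0) = 4 by decide, if_neg (by decide), if_neg (by decide)]
    have w3 : wdeg p q 3 = 4 := by rw [wdeg, show (∑ j : Fin 9, if Groetzsch.Adj 3 (sing j) then 1 else 0) = 4 by decide, if_neg (by decide), if_neg (by decide)]
    have w4 : wdeg p q 4 = 3 + q := by rw [wdeg, show (∑ j : Fin 9, if Groetzsch.Adj 4 (sing j) then 1 else 0) = 3 by decide, if_neg (by decide), if_pos (by decide)]; omega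
    have w5 : wdeg p q 5 = 2 + p := by rw [wdeg, show (∑ j : Fin 9, if Groetzsch.Adj 5 (sing j) then 1 else 0) = 2 by decide, if_pos (by decide), if_neg (by decide)]; omega
    have w6 : wdeg p q 6 = 2 + p := by rw [wdeg, show (∑ j : Fin 9, if Groetzsch.Adj 6 (sing j) then 1 else 0) = 2 by decide, if_pos (by decide), if_neg (by decide)]; omega
    have w7 : wdeg p q 7 = 2 + p := by rw [wdeg, show (∑ j : Fin 9, if Groetzsch.Adj 7 (sing j) then 1 else 0) = 2 by decide, if_pos (by decide), if_neg (by decide)]; omega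
    have w8 : wdeg p q 8 = 2 + p := by rw [wdeg, show (∑ j : Fin 9, if Groetzsch.Adj 8 (sing j) then 1 else 0) = 2 by decide, if_pos (by decide), if_neg (by decide)]; omega
    have w9 : wdeg p q 9 = 2 + p := by rw [wdeg, show (∑ j : Fin 9, if Groetzsch.Adj 9 (sing j) then 1 else 0) = 2 by decide, if_pos (by decide), if_neg (by decide)]; omega
    have w10 : wdeg p q 10 = 4 + q := by rw [wdeg, show (∑ j : Fin 9, if Groetzsch.Adj 10 (sing j) then 1 else 0) = 4 by decide, if_neg (by decide), if_pos (by decide)]; omega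
    calc ∑ a, (blow p q hn).degree a
        = ∑ a, wdeg p q (psi p q (bij p q hn a)) :=
          Finset.sum_congr rfl fun a _ => blow_degree p q hn a
      _ = ∑ x : Fin 9 ⊕ (Fin p ⊕ Fin q), wdeg p q (psi p q x) :=
          Fintype.sum_equiv (bij p q hn) _ _ (fun _ => rfl)
      _ = ∑ i : Fin 9, wdeg p q (sing i) + ((∑ _i : Fin p, wdeg p q 10)
            + ∑ _i : Fin q, wdeg p q 5) := by
          rw [Fintype.sum_sum_type, Fintype.sum_sum_type]
          simp only [psi, Sum.elim_inl, Sum.elim_inr]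
      _ = 2 * (p*q + 4*p + 2*q + 13) := by
          simp only [Finset.sum_const, Finset.card_univ, Fintype.card_fin, smul_eq_mul]
          rw [show (∑ i : Fin 9, wdeg p q (sing i)) =
            wdeg p q 0 + wdeg p q 1 + wdeg p q 2 + wdeg p q 3 + wdeg p q 4 + wdeg p q 6
              + wdeg p q 7 + wdeg p q 8 + wdeg p q 9 by
            simp [Fin.sum_univ_succ, sing]; ring]
          rw [w0, w1, w2, w3, w4, w5, w6, w7, w8, w9, w10]
          ring
  omega

end Blowup



variable {V : Type*} (H : SimpleGraph V)

def ClosedWalk (ℓ : ℕ) : Prop :=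
  ∃ f : ℕ → V, f ℓ = f 0 ∧ ∀ i < ℓ, H.Adj (f i) (f (i+1))

lemma walk_length_cast {b : V} {x y : V} (hxy : x = y) (w : H.Walk x b) :
    (hxy ▸ w : H.Walk y b).length = w.length := by cases hxy; rfl

lemma exists_odd_closed_walk (h : ¬ H.Colorable 2) : ∃ ℓ, Odd ℓ ∧ ClosedWalk H ℓ := by
  classical
  by_contra hno
  push_neg at hno
  have hpar : ∀ (x y : V) (w1 w2 : H.Walk x y), w1.length % 2 = w2.length % 2 := by
    intro x y w1 w2
    by_contra hne
    set w := w1.append w2.reverse with hw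
    have hlen : w.length = w1.length + w2.length := by
      rw [hw, SimpleGraph.Walk.length_append, SimpleGraph.Walk.length_reverse]
    have hodd : Odd w.length := by
      rw [Nat.odd_iff, hlen]; omega
    refine (hno w.length hodd) ⟨fun i => w.getVert i, ?_, fun i hi => w.adj_getVert_succ hi⟩
    show w.getVert w.length = w.getVert 0
    rw [SimpleGraph.Walk.getVert_length, SimpleGraph.Walk.getVert_zero]
  apply h
  let rep : V → V := fun x => (H.connectedComponentMk x).out
  have hreach : ∀ x : V, H.Reachable (rep x) x := by
    intro x
    exact SimpleGraph.ConnectedComponent.eq.mp (H.connectedComponentMk x).out_eq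
  let len : V → ℕ := fun x => ((hreach x).some).length
  refine ⟨SimpleGraph.Coloring.mk (fun x => ⟨len x % 2, by omega⟩) ?_⟩
  intro a b hab hc
  have hval : len a % 2 = len b % 2 := by
    have := congrArg Fin.val hc
    simpa using this
  have hrr : rep a = rep b := by
    show (H.connectedComponentMk a).out = (H.connectedComponentMk b).out
    rw [SimpleGraph.ConnectedComponent.connectedComponentMk_eq_of_adj hab]
  let wcat : H.Walk (rep a) b := ((hreach a).some).concat hab
  let wb : H.Walk (rep a) b := hrr.symm ▸ (hreach b).some
  have h1 : wcat.length = len a + 1 := SimpleGraph.Walk.length_concat _ _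
  have h2 : wb.length = len b := walk_length_cast H hrr.symm _
  have := hpar (rep a) b wcat wb
  rw [h1, h2] at this
  omega

lemma splice {f : ℕ → V} {ℓ a b : ℕ} (hab : a < b) (hbl : b ≤ ℓ)
    (hf : f ℓ = f 0) (hadj : ∀ i < ℓ, H.Adj (f i) (f (i+1))) (heq : f a = f b) :
    ClosedWalk H (b - a) ∧ ClosedWalk H (ℓ - (b - a)) := by
  constructor
  · refine ⟨fun i => f (a + i), ?_, fun i hi => ?_⟩
    · show f (a + (b - a)) = f (a + 0)
      rw [show a + (b - a) = b by omega, Nat.add_zero, heq]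
    · show H.Adj (f (a + i)) (f (a + (i + 1)))
      rw [show a + (i + 1) = (a + i) + 1 by omega]
      exact hadj (a + i) (by omega)
  · refine ⟨fun i => if i ≤ a then f i else f (i + (b - a)), ?_, fun i hi => ?_⟩
    · show (if ℓ - (b - a) ≤ a then f (ℓ - (b - a)) else f (ℓ - (b - a) + (b - a)))
        = (if 0 ≤ a then f 0 else f (0 + (b - a)))
      rw [if_pos (Nat.zero_le a)]
      by_cases hba : b = ℓ
      · rw [if_pos (by omega : ℓ - (b - a) ≤ a), show ℓ - (b - a) = a by omega, heq, hba, hf]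
      · rw [if_neg (by omega : ¬ ℓ - (b - a) ≤ a),
          show ℓ - (b - a) + (b - a) = ℓ by omega, hf]
    · show H.Adj (if i ≤ a then f i else f (i + (b - a)))
        (if i + 1 ≤ a then f (i + 1) else f (i + 1 + (b - a)))
      by_cases h1 : i + 1 ≤ a
      · rw [if_pos (by omega : i ≤ a), if_pos h1]
        exact hadj i (by omega)
      · by_cases h2 : i ≤ a
        · have hia : i = a := by omega
          rw [if_pos h2, if_neg h1, hia, heq, show a + 1 + (b - a) = b + 1 by omega]
          exact hadj b (by omega)
        · rw [if_neg h2, if_neg h1, show i + 1 + (b - a) = (i + (b - a)) + 1 by omega]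
          exact hadj (i + (b - a)) (by omega)

lemma chord_splice {f : ℕ → V} {ℓ a b : ℕ} (hab : a < b) (hbl : b + 1 ≤ ℓ)
    (hf : f ℓ = f 0) (hadj : ∀ i < ℓ, H.Adj (f i) (f (i+1))) (hch : H.Adj (f a) (f b)) :
    ClosedWalk H (b - a + 1) ∧ ClosedWalk H (ℓ - (b - a) + 1) := by
  constructor
  · refine ⟨fun i => if i ≤ b - a then f (a + i) else f a, ?_, fun i hi => ?_⟩
    · show (if b - a + 1 ≤ b - a then f (a + (b - a + 1)) else f a)
        = (if 0 ≤ b - a then f (a + 0) else f a)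
      rw [if_neg (by omega), if_pos (Nat.zero_le _), Nat.add_zero]
    · show H.Adj (if i ≤ b - a then f (a + i) else f a)
        (if i + 1 ≤ b - a then f (a + (i + 1)) else f a)
      by_cases h1 : i + 1 ≤ b - a
      · rw [if_pos (by omega), if_pos h1, show a + (i+1) = (a+i)+1 by omega]
        exact hadj (a + i) (by omega)
      · have hieq : i = b - a := by omega
        rw [if_pos (by omega), if_neg h1, hieq, show a + (b - a) = b by omega]
        exact hch.symm
  · refine ⟨fun i => if i ≤ a then f i else f (i - 1 + (b - a)), ?_, fun i hi => ?_⟩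
    · show (if ℓ - (b - a) + 1 ≤ a then f (ℓ - (b - a) + 1) else f (ℓ - (b - a) + 1 - 1 + (b - a)))
        = (if 0 ≤ a then f 0 else f (0 - 1 + (b - a)))
      rw [if_neg (by omega), if_pos (Nat.zero_le _),
        show ℓ - (b - a) + 1 - 1 + (b - a) = ℓ by omega, hf]
    · show H.Adj (if i ≤ a then f i else f (i - 1 + (b - a)))
        (if i + 1 ≤ a then f (i + 1) else f (i + 1 - 1 + (b - a)))
      by_cases h1 : i + 1 ≤ a
      · rw [if_pos (by omega), if_pos h1]
        exact hadj i (by omega)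
      · by_cases h2 : i ≤ a
        · have hia : i = a := by omega
          rw [if_pos h2, if_neg h1, hia, show a + 1 - 1 + (b - a) = b by omega]
          exact hch
        · rw [if_neg h2, if_neg h1, show i + 1 - 1 + (b - a) = (i - 1 + (b - a)) + 1 by omega]
          exact hadj (i - 1 + (b - a)) (by omega)




lemma arith_final (N K L : ℕ) (hN : 90 ≤ N) (hK : 3 ≤ K) (hL : L = 2*K - 1)
    (hKN : 2*K ≤ N + 1) : (N-K)^2/4 + L ≤ (N-3)^2/4 + 5 := by
  by_cases h3 : K = 3
  · subst h3
    rw [show L = 5 by omega]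
  · have hK4 : 4 ≤ K := by omega
    have ha4 : 4 ≤ N - K := by omega
    have key : (N-K)^2 + 4*(2*K-6) ≤ (N-3)^2 := by
      have hsplit : N - 3 = (N-K) + (K-3) := by omega
      rw [hsplit]
      have expand : ((N-K) + (K-3))^2 = (N-K)^2 + 2*(N-K)*(K-3) + (K-3)^2 := by ring
      rw [expand]
      have h8 : 4*(2*K-6) = 8*(K-3) := by omega
      rw [h8]
      have hmul : 8*(K-3) ≤ 2*(N-K)*(K-3) :=
        Nat.mul_le_mul_right (K-3) (by omega : 8 ≤ 2*(N-K))
      omega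
    calc (N-K)^2/4 + L = (N-K)^2/4 + (2*K-6) + 5 := by omega
      _ = ((N-K)^2 + 4*(2*K-6))/4 + 5 := by
          rw [Nat.add_mul_div_left _ _ (by norm_num : 0 < 4)]
      _ ≤ (N-3)^2/4 + 5 := Nat.add_le_add_right (Nat.div_le_div_right key) 5

lemma amgm (a b : ℕ) : 4*(a*b) ≤ (a+b)^2 := by nlinarith [two_mul_le_add_sq a b]

set_option maxHeartbeats 1000000 in
lemma upper {n : ℕ} (hn : 90 ≤ n) (G : SimpleGraph (Fin n)) (hfree : G.CliqueFree 3)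
    (hcol : ¬ G.Colorable 3) : G.edgeSet.ncard ≤ (n-3)^2/4 + 5 := by
  classical
  have notri : ∀ a b c : Fin n, G.Adj a b → G.Adj a c → G.Adj b c → False := by
    intro a b c h1 h2 h3
    exact hfree {a,b,c} (SimpleGraph.is3Clique_triple_iff.mpr ⟨h1,h2,h3⟩)
  obtain ⟨v, -, hv⟩ := Finset.exists_max_image Finset.univ (fun x => G.degree x)
    ⟨⟨0, by omega⟩, Finset.mem_univ _⟩
  have hvmax : ∀ x : Fin n, G.degree x ≤ G.degree v := fun x => hv x (Finset.mem_univ x)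
  set Δ := G.degree v with hΔ
  set Nv := G.neighborFinset v with hNvdef
  set T := Nvᶜ with hTdef
  set s := T.card with hsdef
  have hNvcard : Nv.card = Δ := G.card_neighborFinset_eq_degree v
  have hsn : s + Δ = n := by
    have h1 : T.card = Fintype.card (Fin n) - Nv.card := Finset.card_compl Nv
    have h2 : Nv.card ≤ Fintype.card (Fin n) := Finset.card_le_univ Nv
    simp only [Fintype.card_fin] at h1 h2
    omega
  have hNvind : ∀ a ∈ Nv, ∀ b ∈ Nv, ¬ G.Adj a b := by
    intro a ha b hb hab
    exact notri v a b ((G.mem_neighborFinset v a).mp ha) ((G.mem_neighborFinset v b).mp hb) hab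
  set H : SimpleGraph (Fin n) :=
    { Adj := fun x y => G.Adj x y ∧ x ∈ T ∧ y ∈ T,
      symm := ⟨fun x y h => ⟨h.1.symm, h.2.2, h.2.1⟩⟩,
      loopless := ⟨fun x h => G.loopless.irrefl x h.1⟩ } with hHdef
  have hHadj : ∀ x y, H.Adj x y ↔ (G.Adj x y ∧ x ∈ T ∧ y ∈ T) := fun x y => Iff.rfl
  have hH2 : ¬ H.Colorable 2 := by
    rintro ⟨c⟩
    apply hcol
    refine ⟨SimpleGraph.Coloring.mk
      (fun x => if x ∈ Nv then (2 : Fin 3) else (Fin.castLE (by omega) (c x))) ?_⟩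
    intro a b hab
    by_cases ha : a ∈ Nv <;> by_cases hb : b ∈ Nv <;>
      simp only [ha, hb, if_true, if_false]
    · exact absurd hab (hNvind a ha b hb)
    · intro hcontra
      have hval := congrArg Fin.val hcontra
      simp only [Fin.coe_castLE] at hval
      have hlt := (c b).isLt
      omega
    · intro hcontra
      have hval := congrArg Fin.val hcontra
      simp only [Fin.coe_castLE] at hval
      have hlt := (c a).isLt
      omega
    · intro hcontra
      have hadj' : H.Adj a b :=
        (hHadj a b).mpr ⟨hab, Finset.mem_compl.mpr ha, Finset.mem_compl.mpr hb⟩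
      have hval := congrArg Fin.val hcontra
      simp only [Fin.coe_castLE] at hval
      exact c.valid hadj' (Fin.val_injective hval)
  have hex : ∃ m, Odd m ∧ ClosedWalk H m := exists_odd_closed_walk H hH2
  have hspec := Nat.find_spec hex
  have hminpre := fun m => Nat.find_min hex (m := m)
  set ℓ := Nat.find hex with hldef
  obtain ⟨hoddl, f, hf0, hadjH⟩ := hspec
  have hmin : ∀ m, m < ℓ → ¬ (Odd m ∧ ClosedWalk H m) := fun m hm => hminpre m hm
  have hadjG : ∀ i, i < ℓ → G.Adj (f i) (f (i+1)) := fun i hi => ((hHadj _ _).mp (hadjH i hi)).1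
  have hfT : ∀ i, i < ℓ → f i ∈ T := fun i hi => ((hHadj _ _).mp (hadjH i hi)).2.1
  have hlpos : 0 < ℓ := by
    rcases Nat.eq_zero_or_pos ℓ with h|h
    · exfalso; rw [Nat.odd_iff, h] at hoddl; omega
    · exact h
  have hl1 : ℓ ≠ 1 := by
    intro h1
    have hadj01 := hadjG 0 (by omega)
    rw [h1] at hf0
    rw [show (0:ℕ)+1 = 1 from rfl, hf0] at hadj01
    exact G.loopless.irrefl _ hadj01
  have hl3 : ℓ ≠ 3 := by
    intro h3
    have h2 := hadjG 2 (by omega)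
    rw [h3] at hf0
    rw [show (2:ℕ)+1 = 3 from rfl, hf0] at h2
    exact notri (f 0) (f 1) (f 2) (hadjG 0 (by omega)) h2.symm (hadjG 1 (by omega))
  have hl5 : 5 ≤ ℓ := by
    have := hoddl
    rw [Nat.odd_iff] at this
    omega
  set k := (ℓ + 1) / 2 with hkdef
  have hlk : ℓ = 2 * k - 1 := by
    have := hoddl; rw [Nat.odd_iff] at this; omega
  have hk3 : 3 ≤ k := by omega
  have hinj : ∀ i j, i < j → j < ℓ → f i ≠ f j := by
    intro i j hij hj heq
    obtain ⟨c1, c2⟩ := splice H hij (by omega) hf0 hadjH heq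
    have hol := hoddl; rw [Nat.odd_iff] at hol
    rcases Nat.even_or_odd (j - i) with he|ho
    · rw [Nat.even_iff] at he
      refine hmin (ℓ - (j - i)) (by omega) ⟨?_, c2⟩
      rw [Nat.odd_iff]; omega
    · exact hmin (j - i) (by omega) ⟨ho, c1⟩
  have hchordfree : ∀ i j, i < j → j < ℓ → G.Adj (f i) (f j) →
      j = i + 1 ∨ (i = 0 ∧ j = ℓ - 1) := by
    intro i j hij hj hadj
    by_contra hcon
    push_neg at hcon
    obtain ⟨hji1, hji2⟩ := hcon
    have hji2' : 2 ≤ j - i := by omega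
    have hjil : j - i ≤ ℓ - 2 := by
      by_cases hi0 : i = 0
      · have := hji2 hi0
        omega
      · omega
    have hch : H.Adj (f i) (f j) := (hHadj _ _).mpr ⟨hadj, hfT i (by omega), hfT j hj⟩
    obtain ⟨c1, c2⟩ := chord_splice H hij (by omega) hf0 hadjH hch
    have hol := hoddl; rw [Nat.odd_iff] at hol
    rcases Nat.even_or_odd (j - i) with he|ho
    · rw [Nat.even_iff] at he
      refine hmin (j - i + 1) (by omega) ⟨?_, c1⟩
      rw [Nat.odd_iff]; omega
    · rw [Nat.odd_iff] at ho
      refine hmin (ℓ - (j - i) + 1) (by omega) ⟨?_, c2⟩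
      rw [Nat.odd_iff]; omega
  have hchord : ∀ i j, i < ℓ → j < ℓ → G.Adj (f i) (f j) →
      j = i + 1 ∨ i = j + 1 ∨ (i = 0 ∧ j = ℓ - 1) ∨ (j = 0 ∧ i = ℓ - 1) := by
    intro i j hi hj hadj
    rcases lt_trichotomy i j with h|h|h
    · rcases hchordfree i j h hj hadj with h'|h'
      · exact Or.inl h'
      · exact Or.inr (Or.inr (Or.inl h'))
    · exfalso; rw [h] at hadj; exact G.loopless.irrefl _ hadj
    · rcases hchordfree j i h hi hadj.symm with h'|h'
      · exact Or.inr (Or.inl h')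
      · exact Or.inr (Or.inr (Or.inr h'))
  set C := (Finset.range ℓ).image f with hCdef
  have hinjOn : ∀ x ∈ Finset.range ℓ, ∀ y ∈ Finset.range ℓ, f x = f y → x = y := by
    intro x hx y hy hxy
    rw [Finset.mem_range] at hx hy
    rcases lt_trichotomy x y with h|h|h
    · exact absurd hxy (hinj x y h hy)
    · exact h
    · exact absurd hxy.symm (hinj y x h hx)
  have hCcard : C.card = ℓ := by
    rw [hCdef, Finset.card_image_of_injOn (fun x hx y hy h =>
      hinjOn x (Finset.mem_coe.mp hx) y (Finset.mem_coe.mp hy) h), Finset.card_range]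
  have hCT : C ⊆ T := by
    intro x hx
    obtain ⟨i, hi, rfl⟩ := Finset.mem_image.mp hx
    exact hfT i (Finset.mem_range.mp hi)
  have hCs : ℓ ≤ s := by
    rw [← hCcard]; exact Finset.card_le_card hCT
  have swap : ∀ A B : Finset (Fin n),
      (∑ x ∈ A, (B.filter (G.Adj x)).card) = ∑ y ∈ B, (A.filter (G.Adj y)).card := by
    intro A B
    simp only [Finset.card_filter]
    rw [Finset.sum_comm]
    refine Finset.sum_congr rfl fun y _ => Finset.sum_congr rfl fun x _ => ?_
    exact if_congr (G.adj_comm x y) rfl rfl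
  have hTparts : C ∪ (T \ C) = T := Finset.union_sdiff_of_subset hCT
  have huniv : T ∪ Nv = Finset.univ := by
    rw [hTdef]
    ext x
    simp [Finset.mem_compl]
    tauto
  have hdisjTC : Disjoint C (T \ C) := Finset.disjoint_sdiff
  have hdisjTNv : Disjoint T Nv := by rw [hTdef]; exact disjoint_compl_left
  have degsplit : ∀ x : Fin n, G.degree x =
      (C.filter (G.Adj x)).card + ((T \ C).filter (G.Adj x)).card
        + (Nv.filter (G.Adj x)).card := by
    intro x
    rw [← G.card_neighborFinset_eq_degree x, SimpleGraph.neighborFinset_eq_filter]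
    have huniv2 : (Finset.univ : Finset (Fin n)) = (C ∪ (T \ C)) ∪ Nv := by
      rw [hTparts, huniv]
    have d2 : Disjoint (Finset.filter (G.Adj x) C) (Finset.filter (G.Adj x) (T \ C)) :=
      Finset.disjoint_filter_filter hdisjTC
    have d1 : Disjoint (Finset.filter (G.Adj x) C ∪ Finset.filter (G.Adj x) (T \ C))
        (Finset.filter (G.Adj x) Nv) := by
      rw [← Finset.filter_union, hTparts]
      exact Finset.disjoint_filter_filter hdisjTNv
    rw [huniv2, Finset.filter_union, Finset.filter_union,
      Finset.card_union_of_disjoint d1, Finset.card_union_of_disjoint d2]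
  -- bound (a)
  have hZC : (∑ x ∈ C, (C.filter (G.Adj x)).card) ≤ 2 * ℓ := by
    rw [hCdef, Finset.sum_image hinjOn]
    have hper : ∀ i ∈ Finset.range ℓ,
        (((Finset.range ℓ).image f).filter (G.Adj (f i))).card ≤ 2 := by
      intro i hi
      rw [Finset.mem_range] at hi
      have hsub : ((Finset.range ℓ).image f).filter (G.Adj (f i)) ⊆
          {f ((i+1) % ℓ), f ((i + (ℓ-1)) % ℓ)} := by
        intro y hy
        rw [Finset.mem_filter] at hy
        obtain ⟨hyC, hyadj⟩ := hy
        obtain ⟨j, hj, rfl⟩ := Finset.mem_image.mp hyC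
        rw [Finset.mem_range] at hj
        simp only [Finset.mem_insert, Finset.mem_singleton]
        rcases hchord i j hi hj hyadj with h|h|h|h
        · left; rw [h, Nat.mod_eq_of_lt (by omega)]
        · right
          rw [show i + (ℓ - 1) = j + ℓ by omega, Nat.add_mod_right,
            Nat.mod_eq_of_lt (by omega)]
        · right
          rw [h.2, show i + (ℓ-1) = ℓ - 1 by omega, Nat.mod_eq_of_lt (by omega)]
        · left
          rw [h.1, show (i + 1) % ℓ = 0 by rw [show i + 1 = ℓ by omega, Nat.mod_self]]
      calc (((Finset.range ℓ).image f).filter (G.Adj (f i))).card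
          ≤ ({f ((i+1) % ℓ), f ((i + (ℓ-1)) % ℓ)} : Finset (Fin n)).card :=
            Finset.card_le_card hsub
        _ ≤ 2 := by
            refine (Finset.card_insert_le _ _).trans ?_
            rw [Finset.card_singleton]
    calc ∑ i ∈ Finset.range ℓ, (((Finset.range ℓ).image f).filter (G.Adj (f i))).card
        ≤ ∑ _i ∈ Finset.range ℓ, 2 := Finset.sum_le_sum hper
      _ = 2 * ℓ := by rw [Finset.sum_const, Finset.card_range, smul_eq_mul, mul_comm]
  -- bound (b)
  have hCind : ∀ u : Fin n, (C.filter (G.Adj u)).card ≤ ℓ / 2 := by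
    intro u
    set S := (Finset.range ℓ).filter (fun i => G.Adj u (f i)) with hSdef
    have hSsub : S ⊆ Finset.range ℓ := Finset.filter_subset _ _
    have himg : C.filter (G.Adj u) = S.image f := by
      ext y
      simp only [hCdef, hSdef, Finset.mem_filter, Finset.mem_image]
      constructor
      · rintro ⟨⟨j, hj, rfl⟩, hadj⟩
        exact ⟨j, ⟨hj, hadj⟩, rfl⟩
      · rintro ⟨j, ⟨hj, hadj⟩, rfl⟩
        exact ⟨⟨j, hj, rfl⟩, hadj⟩
    have hScard : (S.image f).card = S.card :=
      Finset.card_image_of_injOn (fun x hx y hy h =>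
        hinjOn x (hSsub (Finset.mem_coe.mp hx)) y (hSsub (Finset.mem_coe.mp hy)) h)
    have hstep : ∀ i ∈ S, ((i+1) % ℓ) ∉ S := by
      intro i hiS hiS'
      rw [hSdef, Finset.mem_filter, Finset.mem_range] at hiS hiS'
      have hcyc : G.Adj (f i) (f ((i+1) % ℓ)) := by
        by_cases h : i + 1 < ℓ
        · rw [Nat.mod_eq_of_lt h]
          exact hadjG i hiS.1
        · rw [show i + 1 = ℓ by omega, Nat.mod_self]
          have := hadjG i hiS.1
          rw [show i + 1 = ℓ by omega, hf0] at this
          exact this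
      exact notri u (f i) (f ((i+1) % ℓ)) hiS.2 hiS'.2 hcyc
    set S' := S.image (fun i => (i+1) % ℓ) with hS'def
    have hmod : ∀ m, m < ℓ → (m+1) % ℓ = if m + 1 = ℓ then 0 else m+1 := by
      intro m hm
      split_ifs with h
      · rw [h, Nat.mod_self]
      · rw [Nat.mod_eq_of_lt (by omega)]
    have hS'card : S'.card = S.card := by
      refine Finset.card_image_of_injOn (fun x hx y hy h => ?_)
      have hxl := Finset.mem_range.mp (hSsub (Finset.mem_coe.mp hx))
      have hyl := Finset.mem_range.mp (hSsub (Finset.mem_coe.mp hy))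
      rw [hmod x hxl, hmod y hyl] at h
      split_ifs at h <;> omega
    have hdisj : Disjoint S S' := by
      rw [Finset.disjoint_right]
      intro x hxS' hxS
      obtain ⟨j, hjS, hji⟩ := Finset.mem_image.mp hxS'
      exact hstep j hjS (hji ▸ hxS)
    have hS'sub : S' ⊆ Finset.range ℓ := by
      intro x hx
      obtain ⟨j, hjS, rfl⟩ := Finset.mem_image.mp hx
      exact Finset.mem_range.mpr (Nat.mod_lt _ hlpos)
    have hcard2 : S.card + S'.card ≤ ℓ := by
      rw [← Finset.card_union_of_disjoint hdisj]
      calc (S ∪ S').card ≤ (Finset.range ℓ).card :=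
            Finset.card_le_card (Finset.union_subset hSsub hS'sub)
        _ = ℓ := Finset.card_range ℓ
    rw [himg, hScard]
    rw [Nat.le_div_iff_mul_le (by norm_num : 0 < 2)]
    omega
  have hXC : (∑ x ∈ C, (Nv.filter (G.Adj x)).card) ≤ Δ * (ℓ / 2) := by
    rw [swap C Nv]
    calc ∑ u ∈ Nv, (C.filter (G.Adj u)).card ≤ Nv.card • (ℓ / 2) :=
          Finset.sum_le_card_nsmul _ _ _ (fun u _ => hCind u)
      _ = Δ * (ℓ / 2) := by rw [smul_eq_mul, hNvcard]
  -- bound (c)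
  have hD : (∑ x ∈ T \ C, G.degree x) ≤ (s - ℓ) * Δ := by
    calc ∑ x ∈ T \ C, G.degree x ≤ (T \ C).card • Δ :=
          Finset.sum_le_card_nsmul _ _ _ (fun x _ => hvmax x)
      _ = (s - ℓ) * Δ := by rw [smul_eq_mul, Finset.card_sdiff_of_subset hCT, hCcard]
  -- independence of Nv: no internal edges
  have hNv0 : ∀ u ∈ Nv, (Nv.filter (G.Adj u)).card = 0 := by
    intro u hu
    rw [Finset.card_eq_zero, Finset.filter_eq_empty_iff]
    exact fun b hb => hNvind u hu b hb
  -- assemble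
  have htotal : ∑ x, G.degree x = 2 * G.edgeFinset.card :=
    SimpleGraph.sum_degrees_eq_twice_card_edges G
  have hsplit_univ : ∑ x, G.degree x =
      (∑ x ∈ C, G.degree x) + (∑ x ∈ T \ C, G.degree x) + (∑ x ∈ Nv, G.degree x) := by
    have e1 := Finset.sum_union (f := fun x => G.degree x) hdisjTNv
    rw [huniv] at e1
    have e2 := Finset.sum_union (f := fun x => G.degree x) hdisjTC
    rw [hTparts] at e2
    rw [e1, e2]
  have hsumC : (∑ x ∈ C, G.degree x) =
      (∑ x ∈ C, (C.filter (G.Adj x)).card) + (∑ x ∈ C, ((T \ C).filter (G.Adj x)).card)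
        + (∑ x ∈ C, (Nv.filter (G.Adj x)).card) := by
    rw [← Finset.sum_add_distrib, ← Finset.sum_add_distrib]
    exact Finset.sum_congr rfl fun x _ => degsplit x
  have hsumNv : (∑ u ∈ Nv, G.degree u) =
      (∑ u ∈ Nv, (C.filter (G.Adj u)).card) + (∑ u ∈ Nv, ((T \ C).filter (G.Adj u)).card) := by
    rw [← Finset.sum_add_distrib]
    refine Finset.sum_congr rfl fun u hu => ?_
    rw [degsplit u, hNv0 u hu, Nat.add_zero]
  have hswap1 : (∑ u ∈ Nv, (C.filter (G.Adj u)).card)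
      = ∑ x ∈ C, (Nv.filter (G.Adj x)).card := (swap Nv C).trans (by rw [swap C Nv])
  have hswap2 : (∑ u ∈ Nv, ((T \ C).filter (G.Adj u)).card)
      = ∑ x ∈ T \ C, (Nv.filter (G.Adj x)).card := swap Nv (T \ C)
  have hswap3 : (∑ x ∈ C, ((T \ C).filter (G.Adj x)).card)
      = ∑ x ∈ T \ C, (C.filter (G.Adj x)).card := swap C (T \ C)
  have hBD : (∑ x ∈ T \ C, (C.filter (G.Adj x)).card)
      + (∑ x ∈ T \ C, (Nv.filter (G.Adj x)).card) ≤ ∑ x ∈ T \ C, G.degree x := by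
    rw [← Finset.sum_add_distrib]
    refine Finset.sum_le_sum fun x _ => ?_
    rw [degsplit x]
    omega
  -- final combination
  have hE : 2 * G.edgeFinset.card ≤ 2 * ℓ + 2 * (Δ * (ℓ / 2)) + 2 * ((s - ℓ) * Δ) := by
    rw [← htotal, hsplit_univ, hsumC, hsumNv, hswap1, hswap2, hswap3]
    omega
  have hE2 : G.edgeFinset.card ≤ ℓ + (Δ * (ℓ / 2) + (s - ℓ) * Δ) := by omega
  have hfact : Δ * (ℓ / 2) + (s - ℓ) * Δ = Δ * (s - k) := by
    have h2 : ℓ / 2 = k - 1 := by omega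
    rw [h2, mul_comm (s - ℓ) Δ, ← Nat.mul_add]
    congr 1
    omega
  rw [hfact] at hE2
  have hsumeq : Δ + (s - k) = n - k := by omega
  have h4 : 4 * (Δ * (s - k)) ≤ (n - k)^2 := by
    rw [← hsumeq]
    exact amgm Δ (s - k)
  have h5 : Δ * (s - k) ≤ (n - k)^2 / 4 :=
    (Nat.le_div_iff_mul_le (by norm_num : 0 < 4)).mpr (by rw [mul_comm]; exact h4)
  have h6 : G.edgeFinset.card ≤ (n - k)^2/4 + ℓ := by omega
  have h7 : (n - k)^2/4 + ℓ ≤ (n-3)^2/4 + 5 :=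
    arith_final n k ℓ hn hk3 hlk (by omega)
  have hconv : G.edgeSet.ncard = G.edgeFinset.card := by
    rw [← SimpleGraph.coe_edgeFinset, Set.ncard_coe_finset]
  omega


end Stmt1Aux

open Stmt1Aux in
theorem stmt_1 (n : ℕ) (hn : 90 ≤ n) :
    IsGreatest {m : ℕ | ∃ G : SimpleGraph (Fin n),
        G.CliqueFree 3 ∧ 4 ≤ G.chromaticNumber ∧ G.edgeSet.ncard = m}
      ((n - 3) ^ 2 / 4 + 5) := by
  constructor
  · -- membership: the Grötzsch blowup
    set q := (n - 11) / 2 with hqdef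
    set p := n - 9 - q with hpdef
    have hq : 0 < q := by omega
    have hp : 0 < p := by omega
    have h9 : n = 9 + (p + q) := by omega
    refine ⟨blow p q h9, blow_cliquefree p q h9, ?_, ?_⟩
    · have hcol := blow_not_colorable p q h9 hp hq
      have h3 : ¬ (blow p q h9).chromaticNumber ≤ ((3:ℕ) : ℕ∞) := fun h =>
        hcol (SimpleGraph.chromaticNumber_le_iff_colorable.mp h)
      have hlt : ((3:ℕ) : ℕ∞) < (blow p q h9).chromaticNumber := not_le.mp h3
      have h4 := (ENat.add_one_le_iff (by simp : ((3:ℕ) : ℕ∞) ≠ ⊤)).mpr hlt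
      have : ((3:ℕ) : ℕ∞) + 1 = 4 := by norm_num
      rwa [this] at h4
    · rw [← SimpleGraph.coe_edgeFinset, Set.ncard_coe_finset, blow_edge_count]
      have hcase : n = 2*q + 11 ∨ n = 2*q + 12 := by omega
      rcases hcase with h|h
      · have hp2 : p = q + 2 := by omega
        have h3 : n - 3 = 2*q + 8 := by omega
        have e1 : p*q + 4*p + 2*q + 13 = (q^2 + 8*q + 16) + 5 := by rw [hp2]; ring
        rw [e1, h3, show (2*q+8)^2 = 4*(q^2 + 8*q + 16) by ring,
          Nat.mul_div_cancel_left _ (by norm_num : 0 < 4)]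
      · have hp3 : p = q + 3 := by omega
        have h3 : n - 3 = 2*q + 9 := by omega
        have e1 : p*q + 4*p + 2*q + 13 = (q^2 + 9*q + 20) + 5 := by rw [hp3]; ring
        rw [e1, h3, show (2*q+9)^2 = 4*(q^2 + 9*q + 20) + 1 by ring,
          Nat.mul_add_div (by norm_num : 0 < 4)]
  · -- upper bound
    rintro m ⟨G, hfree, hchrom, hcard⟩
    rw [← hcard]
    refine upper hn G hfree ?_
    intro hc
    have hle : G.chromaticNumber ≤ ((3:ℕ) : ℕ∞) := hc.chromaticNumber_le
    have : (4 : ℕ∞) ≤ ((3:ℕ) : ℕ∞) := le_trans hchrom hle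
    norm_num at this
end

section
/- For every n ≥ 13 there exists a triangle-free simple graph G on n vertices with chromatic number exactly 4 and exactly ⌊(n−3)²/4⌋ + 5 edges. -/
def HadjO (a b : ℕ) : Prop :=
  (a=0∧b=1)∨(a=1∧b=2)∨(a=2∧b=3)∨(a=3∧b=4)∨(a=4∧b=0)∨
  (a=5∧b=1)∨(a=5∧b=4)∨(a=6∧b=0)∨(a=6∧b=2)∨(a=7∧b=1)∨(a=7∧b=3)∨
  (a=8∧b=2)∨(a=8∧b=4)∨(a=9∧b=3)∨(a=9∧b=0)∨
  (a=10∧b=5)∨(a=10∧b=6)∨(a=10∧b=7)∨(a=10∧b=8)∨(a=10∧b=9)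

def Hadj (a b : ℕ) : Prop := HadjO a b ∨ HadjO b a

set_option maxRecDepth 2000 in
instance (a b : ℕ) : Decidable (HadjO a b) := by unfold HadjO; infer_instance

instance (a b : ℕ) : Decidable (Hadj a b) := by unfold Hadj; infer_instance

lemma Hadj_symm {a b : ℕ} (h : Hadj a b) : Hadj b a := h.elim Or.inr Or.inl

set_option maxRecDepth 2000 in
lemma Hadj_irrefl (a : ℕ) : ¬ Hadj a a := by unfold Hadj HadjO; omega

set_option maxRecDepth 2000 in
lemma Hadj_lt {a b : ℕ} (h : Hadj a b) : a < 11 ∧ b < 11 := by unfold Hadj HadjO at h; omega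

def fval (s x : ℕ) : ℕ := if x < 9 then x else if x < 9 + s then 9 else 10

def GG (n s : ℕ) : SimpleGraph (Fin n) where
  Adj u v := Hadj (fval s u.val) (fval s v.val)
  symm := ⟨fun _ _ h => Hadj_symm h⟩
  loopless := ⟨fun _ h => Hadj_irrefl _ h⟩

instance (n s : ℕ) : DecidableRel (GG n s).Adj :=
  fun _ _ => inferInstanceAs (Decidable (Hadj _ _))

set_option maxRecDepth 4000 in
lemma notriF : ∀ a b c : Fin 11, ¬(Hadj a.val b.val ∧ Hadj a.val c.val ∧ Hadj b.val c.val) := by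
  decide

lemma notriN (a b c : ℕ) : ¬(Hadj a b ∧ Hadj a c ∧ Hadj b c) := by
  rintro ⟨h1, h2, h3⟩
  have l1 := Hadj_lt h1; have l2 := Hadj_lt h2
  exact notriF ⟨a, l1.1⟩ ⟨b, l1.2⟩ ⟨c, l2.2⟩ ⟨h1, h2, h3⟩

lemma GG_cliqueFree (n s : ℕ) : (GG n s).CliqueFree 3 := by
  intro t ht
  obtain ⟨a, b, c, hab, hac, hbc, rfl⟩ := Finset.card_eq_three.mp ht.card_eq
  have h := ht.isClique
  have h1 : (GG n s).Adj a b := h (by simp) (by simp) hab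
  have h2 : (GG n s).Adj a c := h (by simp) (by simp) hac
  have h3 : (GG n s).Adj b c := h (by simp) (by simp) hbc
  exact notriN _ _ _ ⟨h1, h2, h3⟩

-- coloring part

def col (j : ℕ) : Fin 4 :=
  if j=0∨j=2∨j=5∨j=7 then 0 else if j=1∨j=3∨j=6∨j=8 then 1 else if j=4∨j=9 then 2 else 3

set_option maxRecDepth 2000 in
lemma col_valid : ∀ a b : Fin 11, Hadj a.val b.val → col a.val ≠ col b.val := by decide

lemma Hadj_lt' {a b : ℕ} (h : Hadj a b) : a < 11 ∧ b < 11 := by unfold Hadj HadjO at h; omega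

lemma col_validN {a b : ℕ} (h : Hadj a b) : col a ≠ col b := by
  have l := Hadj_lt' h
  exact col_valid ⟨a, l.1⟩ ⟨b, l.2⟩ h

def GGcoloring (n s : ℕ) : (GG n s).Coloring (Fin 4) :=
  SimpleGraph.Coloring.mk (fun v => col (fval s v.val)) (fun h => col_validN h)

set_option maxRecDepth 4000 in
lemma key : ∀ o : Fin 5 → Fin 3, ∀ z : Fin 3, (∀ k : Fin 5, o k ≠ o (k+1)) →
    ∃ k : Fin 5, ∀ y : Fin 3, y = z ∨ y = o (k+1) ∨ y = o (k-1) := by decide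

lemma adj_p : ∀ k : Fin 5, Hadj (5 + k.val) ((k+1 : Fin 5).val) := by decide
lemma adj_m : ∀ k : Fin 5, Hadj (5 + k.val) ((k-1 : Fin 5).val) := by decide
lemma adj_hub : ∀ k : Fin 5, Hadj (5 + k.val) 10 := by decide
lemma adj_o : ∀ k : Fin 5, Hadj (k.val) ((k+1 : Fin 5).val) := by decide

lemma not_col3 (n s : ℕ) (hs : 1 ≤ s) (hn : 9 + s < n) : ¬ (GG n s).Colorable 3 := by
  rintro ⟨C⟩
  have h5 : ∀ k : Fin 5, (k.val : ℕ) < n := fun k => by have := k.isLt; omega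
  have h5' : ∀ k : Fin 5, 5 + k.val < n := fun k => by have := k.isLt; omega
  have fo : ∀ k : Fin 5, fval s k.val = k.val := fun k => by
    have := k.isLt; unfold fval; split_ifs <;> omega
  have fi : ∀ k : Fin 5, fval s (5 + k.val) = 5 + k.val := fun k => by
    have := k.isLt; unfold fval; split_ifs <;> omega
  have fh : fval s (9 + s) = 10 := by unfold fval; split_ifs <;> omega
  have A1 : ∀ k : Fin 5, (GG n s).Adj ⟨5 + k.val, h5' k⟩ ⟨9 + s, hn⟩ := by
    intro k
    show Hadj (fval s (5 + k.val)) (fval s (9 + s))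
    rw [fi, fh]; exact adj_hub k
  have A2 : ∀ k : Fin 5, (GG n s).Adj ⟨5 + k.val, h5' k⟩ ⟨(k+1 : Fin 5).val, h5 _⟩ := by
    intro k
    show Hadj (fval s (5 + k.val)) (fval s ((k+1 : Fin 5).val))
    rw [fi, fo]; exact adj_p k
  have A3 : ∀ k : Fin 5, (GG n s).Adj ⟨5 + k.val, h5' k⟩ ⟨(k-1 : Fin 5).val, h5 _⟩ := by
    intro k
    show Hadj (fval s (5 + k.val)) (fval s ((k-1 : Fin 5).val))
    rw [fi, fo]; exact adj_m k
  have A4 : ∀ k : Fin 5, (GG n s).Adj ⟨k.val, h5 k⟩ ⟨(k+1 : Fin 5).val, h5 _⟩ := by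
    intro k
    show Hadj (fval s (k.val)) (fval s ((k+1 : Fin 5).val))
    rw [fo, fo]; exact adj_o k
  have hproper : ∀ k : Fin 5, C ⟨k.val, h5 k⟩ ≠ C ⟨(k+1 : Fin 5).val, h5 _⟩ :=
    fun k => C.valid (A4 k)
  obtain ⟨k, hk⟩ := key (fun k => C ⟨k.val, h5 k⟩) (C ⟨9 + s, hn⟩) hproper
  rcases hk (C ⟨5 + k.val, h5' k⟩) with h | h | h
  · exact C.valid (A1 k) h
  · exact C.valid (A2 k) h
  · exact C.valid (A3 k) h

lemma GG_chrom (n s : ℕ) (hs : 1 ≤ s) (hn : 9 + s < n) : (GG n s).chromaticNumber = 4 := by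
  have h4 : (GG n s).Colorable 4 := ⟨GGcoloring n s⟩
  have h3 : ¬ (GG n s).Colorable 3 := not_col3 n s hs hn
  apply le_antisymm
  · have := h4.chromaticNumber_le
    simpa using this
  · have hlt : (3 : ℕ∞) < (GG n s).chromaticNumber := by
      by_contra hle
      push_neg at hle
      exact h3 (SimpleGraph.chromaticNumber_le_iff_colorable.mp (by simpa using hle))
    have := Order.add_one_le_of_lt hlt
    calc (4 : ℕ∞) = 3 + 1 := by norm_num
      _ ≤ _ := this

-- edge counting

open Finset

def ind (j l : ℕ) : ℕ := if Hadj j l then 1 else 0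

lemma sum_split (n s : ℕ) (hs : 1 ≤ s) (h9 : 9 + s ≤ n) (F : ℕ → ℕ) :
    ∑ x ∈ Finset.range n, F (fval s x)
      = (∑ x ∈ Finset.range 9, F x) + s * F 9 + (n - (9+s)) * F 10 := by
  have e1 : ∀ x ∈ Finset.Ico 0 9, F (fval s x) = F x := by
    intro x hx
    have hx' := Finset.mem_Ico.mp hx
    have : fval s x = x := by unfold fval; split_ifs <;> omega
    rw [this]
  have e2 : ∀ x ∈ Finset.Ico 9 (9+s), F (fval s x) = F 9 := by
    intro x hx
    have hx' := Finset.mem_Ico.mp hx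
    have : fval s x = 9 := by unfold fval; split_ifs <;> omega
    rw [this]
  have e3 : ∀ x ∈ Finset.Ico (9+s) n, F (fval s x) = F 10 := by
    intro x hx
    have hx' := Finset.mem_Ico.mp hx
    have : fval s x = 10 := by unfold fval; split_ifs <;> omega
    rw [this]
  conv_lhs => rw [Finset.range_eq_Ico,
    ← Finset.sum_Ico_consecutive (fun x => F (fval s x)) (by omega : 0 ≤ 9+s) h9,
    ← Finset.sum_Ico_consecutive (fun x => F (fval s x)) (by omega : (0:ℕ) ≤ 9) (by omega : 9 ≤ 9+s),
    Finset.sum_congr rfl e1, Finset.sum_congr rfl e2, Finset.sum_congr rfl e3,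
    Finset.sum_const, Finset.sum_const]
  rw [Nat.card_Ico, Nat.card_Ico, smul_eq_mul, smul_eq_mul, Finset.range_eq_Ico]
  have : 9 + s - 9 = s := by omega
  rw [this]

def Fdeg (n s j : ℕ) : ℕ := ∑ y ∈ Finset.range n, ind j (fval s y)

lemma deg_eq (n s : ℕ) (v : Fin n) :
    (GG n s).degree v = Fdeg n s (fval s v.val) := by
  unfold Fdeg
  rw [← SimpleGraph.card_neighborFinset_eq_degree, SimpleGraph.neighborFinset_eq_filter,
      Finset.card_filter]
  rw [← Fin.sum_univ_eq_sum_range (fun y => ind (fval s v.val) (fval s y)) n]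
  apply Finset.sum_congr rfl
  intro u _
  show (if (GG n s).Adj v u then 1 else 0) = ind (fval s v.val) (fval s u.val)
  unfold ind
  congr 1

lemma total_deg (n s : ℕ) (hs : 1 ≤ s) (h9 : 9 + s ≤ n) :
    ∑ v : Fin n, (GG n s).degree v
      = 26 + 2*s + 4*(n-(9+s)) + s*(2 + (n-(9+s))) + (n-(9+s))*(4 + s) := by
  calc ∑ v : Fin n, (GG n s).degree v
      = ∑ v : Fin n, Fdeg n s (fval s v.val) :=
        Finset.sum_congr rfl (fun v _ => deg_eq n s v)
    _ = ∑ x ∈ Finset.range n, Fdeg n s (fval s x) :=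
        Fin.sum_univ_eq_sum_range (fun x => Fdeg n s (fval s x)) n
    _ = _ := by
        rw [sum_split n s hs h9]
        have inner : ∀ j : ℕ, Fdeg n s j
            = (∑ l ∈ Finset.range 9, ind j l) + s * ind j 9 + (n-(9+s)) * ind j 10 :=
          fun j => sum_split n s hs h9 (fun l => ind j l)
        simp only [inner]
        rw [Finset.sum_add_distrib, Finset.sum_add_distrib, ← Finset.mul_sum, ← Finset.mul_sum]
        have c1 : ∑ x ∈ Finset.range 9, ∑ l ∈ Finset.range 9, ind x l = 26 := by decide
        have c2 : ∑ x ∈ Finset.range 9, ind x 9 = 2 := by decide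
        have c3 : ∑ x ∈ Finset.range 9, ind x 10 = 4 := by decide
        have c4 : ∑ l ∈ Finset.range 9, ind 9 l = 2 := by decide
        have c5 : ind 9 9 = 0 := by decide
        have c6 : ind 9 10 = 1 := by decide
        have c7 : ∑ l ∈ Finset.range 9, ind 10 l = 4 := by decide
        have c8 : ind 10 9 = 1 := by decide
        have c9 : ind 10 10 = 0 := by decide
        rw [c1, c2, c3, c4, c5, c6, c7, c8, c9]
        ring

lemma edge_count (n s : ℕ) (hs : 1 ≤ s) (h9 : 9 + s ≤ n) :
    (GG n s).edgeFinset.card = (s+4) * ((n-(9+s))+2) + 5 := by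
  have h2 := SimpleGraph.sum_degrees_eq_twice_card_edges (GG n s)
  rw [total_deg n s hs h9] at h2
  set h : ℕ := n - (9+s) with hh
  have : 26 + 2*s + 4*h + s*(2+h) + h*(4+s) = 2 * ((s+4) * (h+2) + 5) := by ring
  omega


theorem stmt_2 (n : ℕ) (hn : 13 ≤ n) :
    ∃ G : SimpleGraph (Fin n), G.CliqueFree 3 ∧ G.chromaticNumber = 4 ∧
      G.edgeSet.ncard = (n - 3) ^ 2 / 4 + 5 := by
  set q : ℕ := (n - 3) / 2 with hq
  have hq5 : 5 ≤ q := by omega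
  set s : ℕ := q - 4 with hs
  have hs1 : 1 ≤ s := by omega
  have h9 : 9 + s < n := by omega
  refine ⟨GG n s, GG_cliqueFree n s, GG_chrom n s hs1 h9, ?_⟩
  have hcard : (GG n s).edgeSet.ncard = (GG n s).edgeFinset.card := by
    rw [← SimpleGraph.coe_edgeFinset, Set.ncard_coe_finset]
  rw [hcard, edge_count n s hs1 (le_of_lt h9)]
  have hs4 : s + 4 = q := by omega
  have hrest : (n - (9+s)) + 2 = (n - 3) - q := by omega
  rw [hs4, hrest]
  have key : q * ((n-3) - q) = (n-3)^2 / 4 := by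
    have : n - 3 = 2*q ∨ n - 3 = 2*q + 1 := by omega
    rcases this with h | h
    · rw [h]
      have h1 : 2*q - q = q := by omega
      have h2 : (2*q)^2 = 4*(q*q) := by ring
      rw [h1, h2, Nat.mul_div_cancel_left _ (by norm_num : 0 < 4)]
    · rw [h]
      have h1 : 2*q + 1 - q = q + 1 := by omega
      have h2 : (2*q+1)^2 = 4*(q*q+q) + 1 := by ring
      rw [h1, h2]
      have h3 : (4*(q*q+q) + 1) / 4 = q*q+q := by
        set t := q*q+q
        omega
      rw [h3]
      ring
  rw [key]
end

section
/- Let G be a triangle-free simple graph. If there exists a set T of at most 2 vertices such that G − T is bipartite (i.e., d_2(G) ≤ 2), then the chromatic number of G is at most 3. -/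
theorem stmt_8 {V : Type*} [Fintype V] (G : SimpleGraph V)
    (htf : G.CliqueFree 3)
    (hd2 : ∃ T : Set V, T.ncard ≤ 2 ∧ (G.induce Tᶜ).Colorable 2) :
    G.chromaticNumber ≤ 3 := by
  classical
  suffices h : G.Colorable 3 by
    have := h.chromaticNumber_le
    exact_mod_cast this
  obtain ⟨T, hT, ⟨C⟩⟩ := hd2
  cases isEmpty_or_nonempty V with
  | inl h => exact ⟨SimpleGraph.Coloring.mk (fun v => isEmptyElim v) (fun {u v} _ => isEmptyElim u)⟩
  | inr h =>
  have htri : ∀ x y z : V, G.Adj x y → G.Adj x z → G.Adj y z → False := fun x y z h1 h2 h3 =>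
    htf {x, y, z} (SimpleGraph.is3Clique_triple_iff.mpr ⟨h1, h2, h3⟩)
  obtain ⟨a, b, hab⟩ : ∃ a b : V, T ⊆ {a, b} := by
    by_cases hne : T.Nonempty
    · obtain ⟨a, ha⟩ := hne
      by_cases h2 : (T \ {a}).Nonempty
      · obtain ⟨b, hb⟩ := h2
        refine ⟨a, b, ?_⟩
        have hba : b ≠ a := by simpa using hb.2
        have hsub : ({a, b} : Set V) ⊆ T := by
          rintro x (rfl | rfl)
          · exact ha
          · exact hb.1
        have heq : ({a, b} : Set V) = T :=
          Set.eq_of_subset_of_ncard_le hsub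
            (hT.trans_eq (Set.ncard_pair (fun h => hba h.symm)).symm) T.toFinite
        rw [← heq]
      · refine ⟨a, a, ?_⟩
        intro x hx
        have hxa : x = a := by
          by_contra hxa
          exact h2 ⟨x, hx, hxa⟩
        simp [hxa]
    · exact ⟨Classical.arbitrary V, Classical.arbitrary V, by
        simp [Set.not_nonempty_iff_eq_empty.mp hne]⟩
  have hmem : ∀ v : V, v ≠ a → v ≠ b → v ∈ Tᶜ := by
    intro v h1 h2 hv
    rcases hab hv with rfl | rfl
    exacts [h1 rfl, h2 rfl]
  have hCadj : ∀ (u v : V) (hu : u ∈ Tᶜ) (hv : v ∈ Tᶜ), G.Adj u v →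
      C ⟨u, hu⟩ ≠ C ⟨v, hv⟩ := by
    intro u v hu hv huv
    exact C.valid huv
  have hcast2 : ∀ c : Fin 2, Fin.castLE (by norm_num) c ≠ (2 : Fin 3) := by decide
  have hcastinj : ∀ c d : Fin 2, Fin.castLE (by norm_num) c = (Fin.castLE (by norm_num) d : Fin 3) → c = d := by decide
  by_cases hGab : G.Adj a b
  · refine ⟨SimpleGraph.Coloring.mk
      (fun v => if v = a then 2 else if v = b then 0 else
        if hv : v ∈ Tᶜ then (if G.Adj b v then 2 else Fin.castLE (by norm_num) (C ⟨v, hv⟩)) else 0) ?_⟩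
    intro u v huv
    have hne := huv.ne
    by_cases hua : u = a
    · rw [if_pos hua]
      have hva : v ≠ a := fun h => hne (hua.trans h.symm)
      rw [if_neg hva]
      by_cases hvb : v = b
      · rw [if_pos hvb]; decide
      · rw [if_neg hvb, dif_pos (hmem v hva hvb)]
        have hbv : ¬ G.Adj b v := fun hbv => htri a b v hGab (hua ▸ huv) hbv
        rw [if_neg hbv]
        exact (hcast2 _).symm
    · rw [if_neg hua]
      by_cases hub : u = b
      · rw [if_pos hub]
        by_cases hva : v = a
        · rw [if_pos hva]; decide
        · rw [if_neg hva]
          have hvb : v ≠ b := fun h => hne (hub.trans h.symm)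
          rw [if_neg hvb, dif_pos (hmem v hva hvb)]
          have hbv : G.Adj b v := hub ▸ huv
          rw [if_pos hbv]; decide
      · rw [if_neg hub, dif_pos (hmem u hua hub)]
        by_cases hva : v = a
        · rw [if_pos hva]
          have hbu : ¬ G.Adj b u := fun hbu => htri u a b (hva ▸ huv) hbu.symm hGab
          rw [if_neg hbu]
          exact hcast2 _
        · rw [if_neg hva]
          by_cases hvb : v = b
          · rw [if_pos hvb]
            have hbu : G.Adj b u := (hvb ▸ huv).symm
            rw [if_pos hbu]; decide
          · rw [if_neg hvb, dif_pos (hmem v hva hvb)]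
            by_cases hbu : G.Adj b u <;> by_cases hbv : G.Adj b v
            · exact absurd (htri b u v hbu hbv huv) id
            · rw [if_pos hbu, if_neg hbv]
              exact (hcast2 _).symm
            · rw [if_neg hbu, if_pos hbv]
              exact hcast2 _
            · rw [if_neg hbu, if_neg hbv]
              intro hcontra
              exact hCadj u v _ _ huv (hcastinj _ _ hcontra)
  · refine ⟨SimpleGraph.Coloring.mk
      (fun v => if v = a ∨ v = b then 2 else
        if hv : v ∈ Tᶜ then Fin.castLE (by norm_num) (C ⟨v, hv⟩) else 0) ?_⟩
    intro u v huv
    have hne := huv.ne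
    by_cases hu : u = a ∨ u = b <;> by_cases hv : v = a ∨ v = b
    · exfalso
      rcases hu with rfl | rfl <;> rcases hv with rfl | rfl
      · exact hne rfl
      · exact hGab huv
      · exact hGab huv.symm
      · exact hne rfl
    · rw [if_pos hu, if_neg hv]
      push_neg at hv
      rw [dif_pos (hmem v hv.1 hv.2)]
      exact fun hcontra => hcast2 _ hcontra.symm
    · rw [if_neg hu, if_pos hv]
      push_neg at hu
      rw [dif_pos (hmem u hu.1 hu.2)]
      exact hcast2 _
    · rw [if_neg hu, if_neg hv]
      push_neg at hu; push_neg at hv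
      rw [dif_pos (hmem u hu.1 hu.2), dif_pos (hmem v hv.1 hv.2)]
      intro hcontra
      exact hCadj u v _ _ huv (hcastinj _ _ hcontra)
end

section
/- For every n ≥ 5 there exists a triangle-free, non-bipartite simple graph on n vertices with exactly ⌊(n−1)²/4⌋ + 1 edges. -/
def R12 (a m x y : ℕ) : Prop :=
  (x < a ∧ a ≤ y ∧ y < m ∧ ¬(x = 0 ∧ y = a)) ∨
  (y < a ∧ a ≤ x ∧ x < m ∧ ¬(y = 0 ∧ x = a)) ∨
  (x = m ∧ (y = 0 ∨ y = a) ∧ x ≠ y) ∨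
  (y = m ∧ (x = 0 ∨ x = a) ∧ x ≠ y)

instance (a m x y : ℕ) : Decidable (R12 a m x y) := by unfold R12; infer_instance

def G12 (n : ℕ) : SimpleGraph (Fin n) where
  Adj v w := R12 ((n-1)/2) (n-1) v.val w.val
  symm := ⟨by intro v w h; unfold R12 at *; omega⟩
  loopless := ⟨by intro v h; unfold R12 at h; omega⟩

instance instG12 (n : ℕ) : DecidableRel (G12 n).Adj := fun v w => by
  show Decidable (R12 _ _ _ _); infer_instance

lemma filt12 (n : ℕ) (p : ℕ → Prop) [DecidablePred p] :
    (Finset.univ.filter fun v : Fin n => p v.val).card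
      = ((Finset.range n).filter p).card := by
  rw [← Nat.Iio_eq_range, ← Fin.map_valEmbedding_univ, Finset.filter_map, Finset.card_map]
  rfl

lemma deg12 (n : ℕ) (hn : 5 ≤ n) (v : Fin n) :
    (G12 n).degree v =
      if v.val < (n-1)/2 then (n-1) - (n-1)/2
      else if v.val < n-1 then (n-1)/2 else 2 := by
  set a := (n-1)/2 with ha
  set m := n-1 with hm
  have ha2 : 2 ≤ a := by omega
  have ham : a + 2 ≤ m := by omega
  have hmn : m < n := by omega
  rw [← SimpleGraph.card_neighborFinset_eq_degree, SimpleGraph.neighborFinset_eq_filter]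
  have : (Finset.univ.filter ((G12 n).Adj v)).card
      = ((Finset.range n).filter fun y => R12 a m v.val y).card := by
    rw [← filt12 n (fun y => R12 a m v.val y)]
    rfl
  rw [this]
  rcases lt_trichotomy v.val a with h | h | h
  · rcases eq_or_ne v.val 0 with h0 | h0
    · have he : ((Finset.range n).filter fun y => R12 a m v.val y)
          = insert m (Finset.Ico (a+1) m) := by
        ext y; simp [R12, Finset.mem_Ico, h0]; omega
      rw [he, Finset.card_insert_of_notMem (by simp [Finset.mem_Ico]), Nat.card_Ico]
      simp only [if_pos h]; omega
    · have he : ((Finset.range n).filter fun y => R12 a m v.val y)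
          = Finset.Ico a m := by
        ext y; simp [R12, Finset.mem_Ico]; omega
      rw [he, Nat.card_Ico]
      simp only [if_pos h]
  · have he : ((Finset.range n).filter fun y => R12 a m v.val y)
        = insert m (Finset.Ico 1 a) := by
      ext y; simp [R12, Finset.mem_Ico, h]; omega
    rw [he, Finset.card_insert_of_notMem (by simp [Finset.mem_Ico]; omega), Nat.card_Ico]
    rw [if_neg (by omega), if_pos (by omega)]; omega
  · rcases lt_trichotomy v.val m with h1 | h1 | h1
    · have he : ((Finset.range n).filter fun y => R12 a m v.val y)
          = Finset.Ico 0 a := by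
        ext y; simp [R12, Finset.mem_Ico]; omega
      rw [he, Nat.card_Ico, if_neg (by omega), if_pos h1]; omega
    · have he : ((Finset.range n).filter fun y => R12 a m v.val y)
          = {(0:ℕ), a} := by
        ext y; simp [R12, h1]; omega
      rw [he, if_neg (by omega), if_neg (by omega)]
      rw [Finset.card_insert_of_notMem (by simp; omega), Finset.card_singleton]
    · exact absurd v.isLt (by omega)

lemma sqq (m : ℕ) : (m/2) * (m - m/2) = m^2/4 := by
  rcases Nat.even_or_odd m with ⟨k, hk⟩ | ⟨k, hk⟩
  · have h1 : m / 2 = k := by omega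
    have h2 : m ^ 2 = 4 * (k * k) := by subst hk; ring
    have h3 : m ^ 2 / 4 = k * k := by omega
    have h4 : m - k = k := by omega
    rw [h1, h3, h4]
  · have h1 : m / 2 = k := by omega
    have h2 : m ^ 2 = 4 * (k * k + k) + 1 := by subst hk; ring
    have h3 : m ^ 2 / 4 = k * k + k := by omega
    have h4 : m - k = k + 1 := by omega
    rw [h1, h3, h4]; ring

lemma card12 (n : ℕ) (hn : 5 ≤ n) :
    (G12 n).edgeFinset.card = (n - 1) ^ 2 / 4 + 1 := by
  set a := (n-1)/2 with ha
  set m := n-1 with hm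
  have key := (G12 n).sum_degrees_eq_twice_card_edges
  have hs : ∑ v : Fin n, (G12 n).degree v = 2 * (a * (m - a) + 1) := by
    have : ∀ v : Fin n, (G12 n).degree v =
        (fun x => if x < a then m - a else if x < m then a else 2) v.val :=
      fun v => deg12 n hn v
    rw [Finset.sum_congr rfl fun v _ => this v]
    rw [Fin.sum_univ_eq_sum_range (fun x => if x < a then m - a else if x < m then a else 2) n]
    rw [Finset.range_eq_Ico,
      ← Finset.sum_Ico_consecutive _ (Nat.zero_le m) (by omega : m ≤ n),
      ← Finset.sum_Ico_consecutive _ (Nat.zero_le a) (by omega : a ≤ m)]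
    have e1 : ∑ x ∈ Finset.Ico 0 a, (if x < a then m - a else if x < m then a else 2)
        = a * (m - a) := by
      rw [Finset.sum_congr rfl (fun x hx => by
        rw [if_pos (by simpa [Finset.mem_Ico] using hx)]), Finset.sum_const, Nat.card_Ico,
        smul_eq_mul, Nat.sub_zero]
    have e2 : ∑ x ∈ Finset.Ico a m, (if x < a then m - a else if x < m then a else 2)
        = (m - a) * a := by
      rw [Finset.sum_congr rfl (fun x hx => by
        simp only [Finset.mem_Ico] at hx
        rw [if_neg (by omega), if_pos (by omega)]), Finset.sum_const, Nat.card_Ico,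
        smul_eq_mul]
    have e3 : ∑ x ∈ Finset.Ico m n, (if x < a then m - a else if x < m then a else 2)
        = 2 := by
      have hmn : m + 1 = n := by omega
      rw [← hmn, Finset.sum_Ico_succ_top (by omega), Finset.Ico_self, Finset.sum_empty]
      rw [if_neg (by omega), if_neg (by omega)]
    rw [e1, e2, e3]
    have : (m - a) * a = a * (m - a) := Nat.mul_comm _ _
    omega
  rw [hs] at key
  have : (G12 n).edgeFinset.card = a * (m - a) + 1 := by omega
  rw [this, sqq m]

theorem stmt_12 (n : ℕ) (hn : 5 ≤ n) :
    ∃ G : SimpleGraph (Fin n), G.CliqueFree 3 ∧ ¬ G.Colorable 2 ∧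
      G.edgeSet.ncard = (n - 1) ^ 2 / 4 + 1 := by
  set a := (n-1)/2 with ha
  set m := n-1 with hm
  have ha2 : 2 ≤ a := by omega
  have ham : a + 2 ≤ m := by omega
  have hmn : m < n := by omega
  refine ⟨G12 n, ?_, ?_, ?_⟩
  · intro t ht
    rw [SimpleGraph.is3Clique_iff] at ht
    obtain ⟨x, y, z, hxy, hxz, hyz, -⟩ := ht
    have h1 : R12 a m x.val y.val := hxy
    have h2 : R12 a m x.val z.val := hxz
    have h3 : R12 a m y.val z.val := hyz
    unfold R12 at h1 h2 h3
    omega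
  · rintro ⟨c⟩
    have key : ∀ x y z : Fin 2, x ≠ y → y ≠ z → x = z := by decide
    set v0 : Fin n := ⟨0, by omega⟩
    set vm : Fin n := ⟨m, by omega⟩
    set va : Fin n := ⟨a, by omega⟩
    set v1 : Fin n := ⟨1, by omega⟩
    set vb : Fin n := ⟨a+1, by omega⟩
    have e1 : (G12 n).Adj v0 vm := by show R12 a m 0 m; unfold R12; omega
    have e2 : (G12 n).Adj vm va := by show R12 a m m a; unfold R12; omega
    have e3 : (G12 n).Adj va v1 := by show R12 a m a 1; unfold R12; omega
    have e4 : (G12 n).Adj v1 vb := by show R12 a m 1 (a+1); unfold R12; omega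
    have e5 : (G12 n).Adj vb v0 := by show R12 a m (a+1) 0; unfold R12; omega
    have q1 := key _ _ _ (c.valid e1) (c.valid e2)
    have q2 := key _ _ _ (c.valid e3) (c.valid e4)
    exact c.valid e5 (q2.symm.trans q1.symm)
  · rw [Set.ncard_eq_toFinset_card', ← SimpleGraph.edgeFinset]
    exact card12 n hn
end

section
/- Let H be a triangle-free simple graph with at least one edge. Then τ(H) < 2ν(H), where τ(H) is the vertex cover number and ν(H) is the matching number of H. -/
/-- A matching of `H`, given as a set of pairwise vertex-disjoint edges of `H`. -/
def IsMatchingSet {V : Type*} (H : SimpleGraph V) (M : Finset (Sym2 V)) : Prop :=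
  ↑M ⊆ H.edgeSet ∧ (M : Set (Sym2 V)).Pairwise fun e f => ∀ v, v ∈ e → v ∉ f

/-- The matching number of `H`: the maximum number of pairwise disjoint edges. -/
noncomputable def matchingNumber {V : Type*} [Fintype V] (H : SimpleGraph V) : ℕ :=
  sSup {k : ℕ | ∃ M : Finset (Sym2 V), IsMatchingSet H M ∧ M.card = k}

/-- A vertex cover of `H`: a set of vertices meeting every edge. -/
def IsVertexCover {V : Type*} (H : SimpleGraph V) (C : Set V) : Prop :=
  ∀ e ∈ H.edgeSet, ∃ v ∈ C, v ∈ e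

/-- The vertex cover number of `H`: minimum size of a vertex cover. -/
noncomputable def coverNumber {V : Type*} [Fintype V] (H : SimpleGraph V) : ℕ :=
  sInf {k : ℕ | ∃ C : Set V, IsVertexCover H C ∧ C.ncard = k}

lemma aux_filter_card {V : Type*} [Fintype V] [DecidableEq V] (e : Sym2 V) (h : ¬e.IsDiag) :
    (Finset.univ.filter (· ∈ e)).card = 2 := by
  induction e using Sym2.ind with
  | _ x y =>
    have hxy : x ≠ y := by simpa using h
    have : (Finset.univ.filter (· ∈ s(x, y))) = {x, y} := by
      ext v; simp [Sym2.mem_iff]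
    rw [this, Finset.card_insert_of_notMem (by simpa using hxy), Finset.card_singleton]


theorem stmt_15 {V : Type*} [Fintype V] (H : SimpleGraph V)
    (htf : H.CliqueFree 3) (hne : H.edgeSet.Nonempty) :
    coverNumber H < 2 * matchingNumber H := by
  classical
  obtain ⟨e₀, he₀⟩ := hne
  set T := {k : ℕ | ∃ M : Finset (Sym2 V), IsMatchingSet H M ∧ M.card = k} with hT
  have h1 : IsMatchingSet H {e₀} :=
    ⟨by simpa using he₀, by simp [Set.Pairwise]⟩
  have hTne : T.Nonempty := ⟨1, {e₀}, h1, Finset.card_singleton _⟩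
  have hbdd : BddAbove T := ⟨Fintype.card (Sym2 V), by
    rintro k ⟨M, _, rfl⟩; exact Finset.card_le_univ M⟩
  obtain ⟨M, hM, hMcard⟩ : ∃ M, IsMatchingSet H M ∧ M.card = matchingNumber H :=
    Nat.sSup_mem hTne hbdd
  have hmax : ∀ M' : Finset (Sym2 V), IsMatchingSet H M' → M'.card ≤ M.card := by
    intro M' h'
    rw [hMcard]
    exact le_csSup hbdd ⟨M', h', rfl⟩
  have hν1 : 1 ≤ M.card := by
    rw [hMcard]; exact le_csSup hbdd ⟨{e₀}, h1, Finset.card_singleton _⟩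
  -- the set of matched vertices
  set S : Finset V := M.biUnion (fun e => Finset.univ.filter (· ∈ e)) with hSdef
  have hSmem : ∀ v : V, v ∈ S ↔ ∃ e ∈ M, v ∈ e := by
    intro v; simp [hSdef]
  have hScard : S.card = 2 * M.card := by
    rw [hSdef, Finset.card_biUnion]
    · rw [Finset.sum_congr rfl fun e he =>
        aux_filter_card e (H.not_isDiag_of_mem_edgeSet (hM.1 he))]
      simp [mul_comm]
    · intro e he f hf hef
      rw [Function.onFun, Finset.disjoint_left]
      intro v hv hv'
      simp only [Finset.mem_filter] at hv hv'
      exact hM.2 he hf hef v hv.2 hv'.2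
  -- pick an edge of M
  have hMne : M.Nonempty := Finset.card_pos.mp hν1
  obtain ⟨e₁, he₁⟩ := hMne
  obtain ⟨a, b⟩ := e₁
  have hab : H.Adj a b := hM.1 he₁
  -- augmenting lemma: adding an edge on unmatched vertices is impossible
  have hsymm : Symmetric fun e f : Sym2 V => ∀ v, v ∈ e → v ∉ f := by
    intro e f h v hvf hve
    exact h v hve hvf
  haveI : Std.Symm (fun e f : Sym2 V => ∀ v, v ∈ e → v ∉ f) := ⟨fun _ _ h => hsymm h⟩
  have haug : ∀ u w : V, H.Adj u w → u ∉ S → w ∉ S → False := by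
    intro u w huw huS hwS
    have hfnot : s(u, w) ∉ M := fun h => huS ((hSmem u).2 ⟨_, h, by simp⟩)
    have hM' : IsMatchingSet H (insert s(u, w) M) := by
      constructor
      · rw [Finset.coe_insert, Set.insert_subset_iff]
        exact ⟨huw, hM.1⟩
      · rw [Finset.coe_insert, Set.pairwise_insert_of_symmetric]
        refine ⟨hM.2, ?_⟩
        intro f hf _ v hv hvf
        rw [Sym2.mem_iff] at hv
        rcases hv with rfl | rfl
        · exact huS ((hSmem v).2 ⟨f, hf, hvf⟩)
        · exact hwS ((hSmem v).2 ⟨f, hf, hvf⟩)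
    have := hmax _ hM'
    rw [Finset.card_insert_of_notMem hfnot] at this
    omega
  -- key claim: one endpoint of e₁ has no unmatched neighbor
  have haS : a ∈ S := (hSmem a).2 ⟨_, he₁, by simp⟩
  have hbS : b ∈ S := (hSmem b).2 ⟨_, he₁, by simp⟩
  have claimA : (∀ x, x ∉ S → ¬H.Adj a x) ∨ (∀ y, y ∉ S → ¬H.Adj b y) := by
    by_contra hcon
    push_neg at hcon
    obtain ⟨⟨x, hxS, hax⟩, ⟨y, hyS, hby⟩⟩ := hcon
    by_cases hxy : x = y
    · subst hxy
      exact htf {a, b, x} (SimpleGraph.is3Clique_triple_iff.2 ⟨hab, hax, hby⟩)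
    · -- augmenting path x - a - b - y
      have hxa : x ≠ a := fun h => hxS (h ▸ haS)
      have hxb : x ≠ b := fun h => hxS (h ▸ hbS)
      have hya : y ≠ a := fun h => hyS (h ▸ haS)
      have hyb : y ≠ b := fun h => hyS (h ▸ hbS)
      have hab' : a ≠ b := hab.ne
      have hErel : ∀ e ∈ M.erase s(a, b), ∀ v, v ∈ s(a, b) → v ∉ e := by
        intro e he
        exact hM.2 he₁ (Finset.mem_coe.mpr (Finset.mem_of_mem_erase he))
          (Finset.ne_of_mem_erase he).symm
      have hEvert : ∀ e ∈ M.erase s(a, b), ∀ v, v ∈ e → v ∈ S := by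
        intro e he v hv
        exact (hSmem v).2 ⟨e, Finset.mem_of_mem_erase he, hv⟩
      have hd1 : ∀ e ∈ M.erase s(a, b), ∀ v, v ∈ s(a, x) → v ∉ e := by
        intro e he v hv hve
        rw [Sym2.mem_iff] at hv
        rcases hv with rfl | rfl
        · exact hErel e he v (by simp) hve
        · exact hxS (hEvert e he v hve)
      have hd2 : ∀ e ∈ M.erase s(a, b), ∀ v, v ∈ s(b, y) → v ∉ e := by
        intro e he v hv hve
        rw [Sym2.mem_iff] at hv
        rcases hv with rfl | rfl
        · exact hErel e he v (by simp) hve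
        · exact hyS (hEvert e he v hve)
      have hd12 : ∀ v, v ∈ s(a, x) → v ∉ s(b, y) := by
        intro v hv hv'
        rw [Sym2.mem_iff] at hv hv'
        rcases hv with rfl | rfl <;> rcases hv' with rfl | rfl
        · exact hab' rfl
        · exact hya rfl
        · exact hxb rfl
        · exact hxy rfl
      set M' : Finset (Sym2 V) := insert s(a, x) (insert s(b, y) (M.erase s(a, b))) with hM'def
      have hby_not : s(b, y) ∉ M.erase s(a, b) := fun h => hyS (hEvert _ h y (by simp))
      have hax_ne : s(a, x) ≠ s(b, y) := fun h => hd12 a (by simp) (h ▸ (by simp : a ∈ s(a, x)))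
      have hax_not : s(a, x) ∉ insert s(b, y) (M.erase s(a, b)) := by
        rw [Finset.mem_insert]
        rintro (h | h)
        · exact hax_ne h
        · exact hxS (hEvert _ h x (by simp))
      have hM'match : IsMatchingSet H M' := by
        constructor
        · rw [hM'def, Finset.coe_insert, Finset.coe_insert, Set.insert_subset_iff,
            Set.insert_subset_iff]
          exact ⟨hax, hby, fun e he => hM.1 (Finset.mem_coe.mpr
            (Finset.mem_of_mem_erase (Finset.mem_coe.mp he)))⟩
        · rw [hM'def, Finset.coe_insert, Finset.coe_insert,
            Set.pairwise_insert_of_symmetric,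
            Set.pairwise_insert_of_symmetric]
          refine ⟨⟨hM.2.mono (by simp [Finset.erase_subset]), ?_⟩, ?_⟩
          · intro e he _
            exact hd2 e (Finset.mem_coe.mp he)
          · intro e he _
            rcases Set.mem_insert_iff.mp he with rfl | he'
            · exact hd12
            · exact hd1 e (Finset.mem_coe.mp he')
      have hcards : M'.card = M.card + 1 := by
        rw [hM'def, Finset.card_insert_of_notMem hax_not,
          Finset.card_insert_of_notMem hby_not, Finset.card_erase_of_mem he₁]
        omega
      have := hmax _ hM'match
      omega
  obtain ⟨c, d, hcd, hdS, hnd⟩ :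
      ∃ c d : V, H.Adj c d ∧ d ∈ S ∧ ∀ y, y ∉ S → ¬H.Adj d y := by
    rcases claimA with h | h
    · exact ⟨b, a, hab.symm, haS, h⟩
    · exact ⟨a, b, hab, hbS, h⟩
  -- the cover
  have hcover : IsVertexCover H (↑(S.erase d) : Set V) := by
    intro f
    induction f using Sym2.ind with
    | _ u w =>
      intro hf
      have huw : H.Adj u w := hf
      by_cases hu : u ∈ S.erase d
      · exact ⟨u, Finset.mem_coe.mpr hu, by simp⟩
      by_cases hw : w ∈ S.erase d
      · exact ⟨w, Finset.mem_coe.mpr hw, by simp⟩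
      exfalso
      simp only [Finset.mem_erase, not_and_or, not_not] at hu hw
      rcases hu with hu | hu <;> rcases hw with hw | hw
      · subst hu; subst hw; exact huw.ne rfl
      · subst hu; exact hnd w hw huw
      · subst hw; exact hnd u hu huw.symm
      · exact haug u w huw hu hw
  have hcovcard : coverNumber H ≤ S.card - 1 := by
    apply Nat.sInf_le
    refine ⟨(↑(S.erase d) : Set V), hcover, ?_⟩
    rw [Set.ncard_coe_finset, Finset.card_erase_of_mem hdS]
  have : coverNumber H ≤ 2 * M.card - 1 := by rw [← hScard]; exact hcovcard
  rw [hMcard] at this hν1; omega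
  -- final arithmetic
end

section
/- Let G be a triangle-free simple graph on n vertices whose vertex set is partitioned into two sets X and Y. Suppose that the set of edges of G having both endpoints in X or both endpoints in Y is exactly the edge set of a 7-cycle all of whose vertices lie in X. Then e(G) ≤ (n−4)²/4 + 7. -/
private lemma fin7_indep : ∀ I : Finset (Fin 7), (∀ i ∈ I, i + 1 ∉ I) → I.card ≤ 3 := by
  set_option maxRecDepth 8000 in decide

private lemma walk_get? {V : Type*} {G : SimpleGraph V} {u v : V} (p : G.Walk u v) :
    ∀ i : ℕ, i ≤ p.length → p.support[i]? = some (p.getVert i) := by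
  induction p with
  | nil => intro i hi; simp_all [SimpleGraph.Walk.support_nil]
  | cons h q ih =>
      intro i hi
      cases i with
      | zero => simp
      | succ n => simpa using ih n (by simpa using hi)

set_option maxHeartbeats 1000000 in
theorem stmt_17 {V : Type*} [Fintype V] (G : SimpleGraph V) [DecidableRel G.Adj]
    (htf : G.CliqueFree 3) (X Y : Set V)
    (hcov : X ∪ Y = Set.univ) (hdisj : Disjoint X Y)
    (x : V) (C : G.Walk x x) (hC : C.IsCycle) (hlen : C.length = 7)
    (hCX : ∀ v ∈ C.support, v ∈ X)
    (hedges : {e ∈ G.edgeSet | (∀ v ∈ e, v ∈ X) ∨ (∀ v ∈ e, v ∈ Y)} =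
      {e : Sym2 V | e ∈ C.edges}) :
    (G.edgeFinset.card : ℝ) ≤ ((Fintype.card V : ℝ) - 4) ^ 2 / 4 + 7 := by
  classical
  -- basic facts about membership of X, Y
  have hXY : ∀ v : V, v ∈ X ∨ v ∈ Y := by
    intro v
    have : v ∈ X ∪ Y := hcov ▸ Set.mem_univ v
    exact this
  have hnotboth : ∀ v : V, v ∈ X → v ∈ Y → False := fun v hvX hvY =>
    Set.disjoint_left.mp hdisj hvX hvY
  -- hedges as an iff
  have hedge_iff : ∀ e : Sym2 V,
      (e ∈ G.edgeSet ∧ ((∀ v ∈ e, v ∈ X) ∨ (∀ v ∈ e, v ∈ Y))) ↔ e ∈ C.edges := by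
    intro e
    constructor
    · intro h; exact (Set.ext_iff.mp hedges e).mp h
    · intro h; exact (Set.ext_iff.mp hedges e).mpr h
  -- endpoints of cycle edges lie in X
  have hCedge_X : ∀ {a b : V}, s(a, b) ∈ C.edges → a ∈ X ∧ b ∈ X := by
    intro a b h
    exact ⟨hCX a (C.fst_mem_support_of_mem_edges h), hCX b (C.snd_mem_support_of_mem_edges h)⟩
  -- the cyclic labelling of the cycle
  set g : Fin 7 → V := fun i => C.getVert ((i : ℕ) + 1) with hg
  have hgetVert7 : C.getVert 7 = x := by
    have := C.getVert_length; rwa [hlen] at this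
  have hget? : ∀ i : ℕ, i ≤ 7 → C.support[i]? = some (C.getVert i) := by
    intro i hi; exact walk_get? C i (by omega)
  -- injectivity of g
  have hg_inj : Function.Injective g := by
    intro i j hij
    have htail : C.support.tail.Nodup := hC.support_nodup
    have hlen_tail : C.support.tail.length = 7 := by
      have h3 := C.length_support
      rw [C.support_eq_cons, List.length_cons, hlen] at h3
      omega
    have hti : ∀ k : ℕ, k < 7 → C.support.tail[k]? = some (C.getVert (k + 1)) := by
      intro k hk
      have h2 : C.support = x :: C.support.tail := C.support_eq_cons
      have := hget? (k + 1) (by omega)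
      rw [h2] at this
      simpa using this
    have h1 : C.support.tail[(i : ℕ)]? = some (g i) := hti i i.isLt
    have h2 : C.support.tail[(j : ℕ)]? = some (g j) := hti j j.isLt
    rw [hij] at h1
    have := (List.getElem?_inj (by rw [hlen_tail]; exact i.isLt) htail).mp (h1.trans h2.symm)
    exact Fin.ext this
  -- adjacency around the cycle
  have hg_adj : ∀ i : Fin 7, G.Adj (g i) (g (i + 1)) := by
    intro i
    by_cases h6 : (i : ℕ) < 6
    · have hadd : ((i + 1 : Fin 7) : ℕ) = (i : ℕ) + 1 := by
        rw [Fin.val_add_one]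
        rw [if_neg (by intro h; rw [h] at h6; simp only [Fin.val_last] at h6; omega)]
      have := C.adj_getVert_succ (i := (i : ℕ) + 1) (by omega)
      simpa [hg, hadd] using this
    · have h6' : (i : ℕ) = 6 := by omega
      have hi1 : ((i + 1 : Fin 7) : ℕ) = 0 := by
        rw [Fin.val_add_one, if_pos (Fin.ext h6')]
      have := C.adj_getVert_succ (i := 0) (by omega)
      simp only [SimpleGraph.Walk.getVert_zero] at this
      have hgi : g i = x := by simp [hg, h6', hgetVert7]
      have hgi1 : g (i + 1) = C.getVert 1 := by simp [hg, hi1]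
      rw [hgi, hgi1]; exact this
  -- membership in support
  have hg_mem : ∀ v : V, v ∈ C.support ↔ ∃ i : Fin 7, g i = v := by
    intro v
    rw [SimpleGraph.Walk.mem_support_iff_exists_getVert]
    constructor
    · rintro ⟨n, hn, hle⟩
      rw [hlen] at hle
      rcases Nat.eq_zero_or_pos n with h0 | hpos
      · subst h0
        refine ⟨6, ?_⟩
        simp only [hg]
        rw [show ((6 : Fin 7) : ℕ) + 1 = 7 from rfl, hgetVert7]
        rw [← hn, C.getVert_zero]
      · refine ⟨⟨n - 1, by omega⟩, ?_⟩
        simp only [hg]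
        show C.getVert (n - 1 + 1) = v
        rw [show n - 1 + 1 = n by omega]; exact hn
    · rintro ⟨i, hi⟩
      exact ⟨(i : ℕ) + 1, hi, by omega⟩
  -- all vertices of a cycle edge lie in X
  have hCedge_X' : ∀ e ∈ C.edges, ∀ v ∈ e, v ∈ X := by
    intro e he
    induction e using Sym2.ind with
    | _ a b =>
      intro v hv
      rcases Sym2.mem_iff.mp hv with h | h <;> subst h
      · exact (hCedge_X he).1
      · exact (hCedge_X he).2
  -- finsets
  set Xf : Finset V := Finset.univ.filter (· ∈ X) with hXf
  set Yf : Finset V := Finset.univ.filter (· ∈ Y) with hYf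
  have hmemX : ∀ v : V, v ∈ Xf ↔ v ∈ X := by intro v; simp [hXf]
  have hmemY : ∀ v : V, v ∈ Yf ↔ v ∈ Y := by intro v; simp [hYf]
  set S : Finset V := Finset.image g Finset.univ with hS
  have hScard : S.card = 7 := by
    rw [hS, Finset.card_image_of_injective _ hg_inj]; simp
  have hSsub : S ⊆ Xf := by
    intro v hv
    rw [hS, Finset.mem_image] at hv
    obtain ⟨i, _, hi⟩ := hv
    exact (hmemX v).mpr (hCX v ((hg_mem v).mpr ⟨i, hi⟩))
  have hX7 : 7 ≤ Xf.card := hScard ▸ Finset.card_le_card hSsub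
  -- neighbors of y ∈ Y lie in X
  have hNsub : ∀ y ∈ Y, G.neighborFinset y ⊆ Xf := by
    intro y hy v hv
    rw [SimpleGraph.mem_neighborFinset] at hv
    rw [hmemX]
    rcases hXY v with hvX | hvY
    · exact hvX
    · exfalso
      have he : s(y, v) ∈ C.edges := by
        apply (hedge_iff s(y, v)).mp
        refine ⟨hv, Or.inr ?_⟩
        intro w hw
        rcases Sym2.mem_iff.mp hw with h | h <;> subst h
        · exact hy
        · exact hvY
      exact hnotboth y (hCedge_X he).1 hy
  -- degree bound for y ∈ Y
  have hdeg : ∀ y ∈ Y, G.degree y ≤ Xf.card - 4 := by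
    intro y hy
    have hI : ((Finset.univ.filter (fun i : Fin 7 => G.Adj y (g i))).card ≤ 3) := by
      apply fin7_indep
      intro i hi hi1
      rw [Finset.mem_filter] at hi hi1
      exact htf {y, g i, g (i + 1)}
        (SimpleGraph.is3Clique_triple_iff.mpr ⟨hi.2, hi1.2, hg_adj i⟩)
    have hcap : (G.neighborFinset y ∩ S).card ≤ 3 := by
      have hsub3 : G.neighborFinset y ∩ S ⊆
          Finset.image g (Finset.univ.filter (fun i : Fin 7 => G.Adj y (g i))) := by
        intro v hv
        rw [Finset.mem_inter, SimpleGraph.mem_neighborFinset] at hv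
        obtain ⟨hadj, hvS⟩ := hv
        rw [hS, Finset.mem_image] at hvS
        obtain ⟨i, -, hi⟩ := hvS
        rw [Finset.mem_image]
        exact ⟨i, Finset.mem_filter.mpr ⟨Finset.mem_univ i, by rw [hi]; exact hadj⟩, hi⟩
      calc (G.neighborFinset y ∩ S).card
          ≤ _ := Finset.card_le_card hsub3
        _ ≤ _ := Finset.card_image_le
        _ ≤ 3 := hI
    have hsplit : G.degree y = (G.neighborFinset y ∩ S).card + (G.neighborFinset y \ S).card := by
      exact (Finset.card_inter_add_card_sdiff (G.neighborFinset y) S).symm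
    have hdiff : (G.neighborFinset y \ S).card ≤ Xf.card - 7 := by
      have hsub2 : G.neighborFinset y \ S ⊆ Xf \ S :=
        Finset.sdiff_subset_sdiff (hNsub y hy) (Finset.Subset.refl S)
      calc (G.neighborFinset y \ S).card ≤ (Xf \ S).card := Finset.card_le_card hsub2
        _ = Xf.card - 7 := by rw [Finset.card_sdiff_of_subset hSsub, hScard]
    omega
  -- split the edge set
  set B : Finset (Sym2 V) := G.edgeFinset.filter (fun e => e ∉ C.edges) with hB
  have hcard_split : G.edgeFinset.card = 7 + B.card := by
    have h1 : (G.edgeFinset.filter (fun e => e ∈ C.edges)).card + B.card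
        = G.edgeFinset.card := by
      rw [hB]
      exact Finset.card_filter_add_card_filter_not (fun e => e ∈ C.edges)
    have hA : (G.edgeFinset.filter (fun e => e ∈ C.edges)) = C.edges.toFinset := by
      ext e
      simp only [Finset.mem_filter, List.mem_toFinset, SimpleGraph.mem_edgeFinset]
      exact ⟨fun h => h.2, fun h => ⟨C.edges_subset_edgeSet h, h⟩⟩
    have hA7 : C.edges.toFinset.card = 7 := by
      rw [List.toFinset_card_of_nodup hC.isCircuit.isTrail.edges_nodup,
        SimpleGraph.Walk.length_edges, hlen]
    rw [hA, hA7] at h1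
    omega
  -- B is the union of incidence sets of Y vertices
  have hBY : B = Yf.biUnion (fun y => G.incidenceFinset y) := by
    ext e
    simp only [hB, Finset.mem_filter, SimpleGraph.mem_edgeFinset, Finset.mem_biUnion]
    constructor
    · rintro ⟨he, hne⟩
      have hnot : ¬ ((∀ v ∈ e, v ∈ X) ∨ (∀ v ∈ e, v ∈ Y)) :=
        fun h => hne ((hedge_iff e).mp ⟨he, h⟩)
      push_neg at hnot
      obtain ⟨⟨v, hv, hvX⟩, -⟩ := hnot
      have hvY : v ∈ Y := (hXY v).resolve_left hvX
      exact ⟨v, (hmemY v).mpr hvY, (SimpleGraph.mem_incidenceFinset _ _ _).mpr ⟨he, hv⟩⟩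
    · rintro ⟨y, hy, hyi⟩
      have hyi' := (SimpleGraph.mem_incidenceFinset _ _ _).mp hyi
      refine ⟨hyi'.1, fun hce => ?_⟩
      exact hnotboth y (hCedge_X' e hce y hyi'.2) ((hmemY y).mp hy)
  have hpair : ∀ y1 ∈ Yf, ∀ y2 ∈ Yf, y1 ≠ y2 →
      Disjoint (G.incidenceFinset y1) (G.incidenceFinset y2) := by
    intro y1 hy1 y2 hy2 hne
    rw [Finset.disjoint_left]
    intro e he1 he2
    have h1 := (SimpleGraph.mem_incidenceFinset _ _ _).mp he1
    have h2 := (SimpleGraph.mem_incidenceFinset _ _ _).mp he2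
    have heq : e = s(y1, y2) := (Sym2.mem_and_mem_iff hne).mp ⟨h1.2, h2.2⟩
    have hce : e ∈ C.edges := by
      apply (hedge_iff e).mp
      refine ⟨h1.1, Or.inr ?_⟩
      intro w hw
      rw [heq] at hw
      rcases Sym2.mem_iff.mp hw with h | h
      · rw [h]; exact (hmemY y1).mp hy1
      · rw [h]; exact (hmemY y2).mp hy2
    exact hnotboth y1 (hCedge_X' e hce y1 h1.2) ((hmemY y1).mp hy1)
  have hBcard : B.card = ∑ y ∈ Yf, G.degree y := by
    rw [hBY, Finset.card_biUnion hpair]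
    exact Finset.sum_congr rfl fun y _ => G.card_incidenceFinset_eq_degree y
  have hsum : ∑ y ∈ Yf, G.degree y ≤ Yf.card * (Xf.card - 4) := by
    calc ∑ y ∈ Yf, G.degree y ≤ ∑ _y ∈ Yf, (Xf.card - 4) :=
          Finset.sum_le_sum fun y hy => hdeg y ((hmemY y).mp hy)
      _ = Yf.card * (Xf.card - 4) := by rw [Finset.sum_const, smul_eq_mul]
  -- cardinalities
  have hdisjf : Disjoint Xf Yf := by
    rw [Finset.disjoint_left]
    intro v hvX hvY
    exact hnotboth v ((hmemX v).mp hvX) ((hmemY v).mp hvY)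
  have hn : Xf.card + Yf.card = Fintype.card V := by
    rw [← Finset.card_union_of_disjoint hdisjf, ← Finset.card_univ]
    congr 1
    ext v
    simp only [Finset.mem_union, Finset.mem_univ, iff_true, hmemX v, hmemY v]
    exact hXY v
  -- final arithmetic
  have hnat : G.edgeFinset.card ≤ 7 + Yf.card * (Xf.card - 4) := by omega
  have h4 : (4 : ℕ) ≤ Xf.card := by omega
  have hreal : (G.edgeFinset.card : ℝ) ≤ 7 + (Yf.card : ℝ) * ((Xf.card : ℝ) - 4) := by
    have := (Nat.cast_le (α := ℝ)).mpr hnat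
    push_cast [Nat.cast_sub h4] at this
    linarith
  have hcast : (Xf.card : ℝ) + (Yf.card : ℝ) = (Fintype.card V : ℝ) := by
    exact_mod_cast congrArg (Nat.cast : ℕ → ℝ) hn
  have ha7 : (7 : ℝ) ≤ (Xf.card : ℝ) := by exact_mod_cast hX7
  have hb0 : (0 : ℝ) ≤ (Yf.card : ℝ) := Nat.cast_nonneg _
  nlinarith [sq_nonneg ((Xf.card : ℝ) - 4 - (Yf.card : ℝ))]
end
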